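/- arXiv:2407.17608 — 5 statements merged into one kernel-verified Lean document; each statement's English description precedes it below -/
import Mathlib

section
/- Biane's inequality: for any π ∈ S_n and the full cycle γ_n = (1,2,…,n), one has #(π) + #(π⁻¹γ_n) ≤ n + 1. -/
/-- The setoid on `α` whose classes are the cycles of the permutation `π`. -/
def cycleSetoid {α : Type*} (π : Equiv.Perm α) : Setoid α :=
  ⟨π.SameCycle, ⟨fun x => Equiv.Perm.SameCycle.refl π x,
    fun h => h.symm, fun h1 h2 => h1.trans h2⟩⟩

/-- The number of cycles (including fixed points) of a permutation. -/
noncomputable def numCycles {α : Type*} (π : Equiv.Perm α) : ℕ :=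
  Nat.card (Quotient (cycleSetoid π))

open Equiv Equiv.Perm Function

section Aux

variable {α : Type*}

/-- If each single step of `σ` stays within an equivalence class of `r`, then
`SameCycle σ` is contained in `r` (finite case). -/
lemma sameCycle_le_of_step [Finite α] (σ : Perm α) (s : Setoid α)
    (hstep : ∀ x, s.r x (σ x)) : ∀ {x y}, σ.SameCycle x y → s.r x y := by
  have key : ∀ (k : ℕ) (x : α), s.r x ((σ ^ k) x) := by
    intro k
    induction k with
    | zero => intro x; simpa using s.refl' x
    | succ k ih =>
      intro x
      have h1 : s.r x (σ x) := hstep x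
      have h2 : s.r (σ x) ((σ ^ k) (σ x)) := ih (σ x)
      have : (σ ^ (k + 1)) x = (σ ^ k) (σ x) := by
        rw [pow_succ]; rfl
      rw [this]
      exact s.trans' h1 h2
  intro x y h
  obtain ⟨i, _, hi⟩ := h.exists_pow_eq'
  rw [← hi]
  exact key i x

lemma card_lt_of_surj_not_inj {A B : Type*} [Finite A] (f : A → B)
    (hsurj : Surjective f) (hninj : ¬ Injective f) : Nat.card B < Nat.card A := by
  have hle : Nat.card B ≤ Nat.card A := Nat.card_le_card_of_surjective f hsurj
  rcases lt_or_eq_of_le hle with h | h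
  · exact h
  · exfalso
    have : Bijective f := (Nat.bijective_iff_surjective_and_card f).mpr ⟨hsurj, h.symm⟩
    exact hninj this.injective

lemma numCycles_inv [Finite α] (σ : Perm α) : numCycles σ⁻¹ = numCycles σ := by
  have : cycleSetoid σ⁻¹ = cycleSetoid σ := by
    apply Setoid.ext
    intro x y
    exact Equiv.Perm.sameCycle_inv
  unfold numCycles
  rw [this]

lemma numCycles_one [Finite α] : numCycles (1 : Perm α) = Nat.card α := by
  apply Nat.card_congr
  refine ⟨Quotient.lift id ?_, fun x => ⟦x⟧, ?_, ?_⟩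
  · intro a b h
    exact Equiv.Perm.sameCycle_one.mp h
  · intro q
    induction q using Quotient.ind
    rfl
  · intro x
    rfl

/-- Multiplying on the right by a swap decreases the number of cycles by at most 1. -/
lemma numCycles_mul_swap_ge [Finite α] [DecidableEq α] (σ : Perm α) (a b : α) :
    numCycles σ ≤ numCycles (σ * Equiv.swap a b) + 1 := by
  classical
  set σ' := σ * Equiv.swap a b with hσ'
  -- the merged relation
  set c : α → Prop := fun x => σ.SameCycle x a ∨ σ.SameCycle x b with hc
  have hcsym : ∀ {x y}, σ.SameCycle x y → c y → c x := by
    intro x y hxy hy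
    rcases hy with h | h
    · exact Or.inl (hxy.trans h)
    · exact Or.inr (hxy.trans h)
  set s'' : Setoid α :=
    ⟨fun x y => σ.SameCycle x y ∨ (c x ∧ c y), by
      constructor
      · intro x; exact Or.inl (Equiv.Perm.SameCycle.refl σ x)
      · intro x y h
        rcases h with h | ⟨h1, h2⟩
        · exact Or.inl h.symm
        · exact Or.inr ⟨h2, h1⟩
      · intro x y z hxy hyz
        rcases hxy with h | ⟨h1, h2⟩
        · rcases hyz with h' | ⟨h1', h2'⟩
          · exact Or.inl (h.trans h')
          · exact Or.inr ⟨hcsym h h1', h2'⟩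
        · rcases hyz with h' | ⟨h1', h2'⟩
          · exact Or.inr ⟨h1, hcsym h'.symm h2⟩
          · exact Or.inr ⟨h1, h2'⟩⟩ with hs''
  -- SameCycle σ' ≤ s''
  have hstep : ∀ x, s''.r x (σ' x) := by
    intro x
    by_cases hxa : x = a
    · subst hxa
      refine Or.inr ⟨Or.inl (Equiv.Perm.SameCycle.refl σ x), ?_⟩
      have : σ' x = σ b := by simp [hσ', Equiv.Perm.mul_apply]
      rw [this]
      exact Or.inr (Equiv.Perm.sameCycle_apply_left.mpr (Equiv.Perm.SameCycle.refl σ b))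
    · by_cases hxb : x = b
      · subst hxb
        refine Or.inr ⟨Or.inr (Equiv.Perm.SameCycle.refl σ x), ?_⟩
        have : σ' x = σ a := by simp [hσ', Equiv.Perm.mul_apply, Equiv.swap_apply_of_ne_of_ne, hxa]
        rw [this]
        exact Or.inl (Equiv.Perm.sameCycle_apply_left.mpr (Equiv.Perm.SameCycle.refl σ a))
      · have : σ' x = σ x := by
          simp [hσ', Equiv.Perm.mul_apply, Equiv.swap_apply_of_ne_of_ne hxa hxb]
        rw [this]
        exact Or.inl ⟨1, by simp⟩
  have hle : ∀ {x y}, σ'.SameCycle x y → s''.r x y := sameCycle_le_of_step σ' s'' hstep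
  -- surjection from cycles of σ' onto classes of s''
  set F : Quotient (cycleSetoid σ') → Quotient s'' :=
    Quotient.lift (fun x => (⟦x⟧ : Quotient s''))
      (fun x y (h : (cycleSetoid σ').r x y) => Quotient.sound (hle h)) with hFdef
  have hFsurj : Surjective F := by
    intro q
    induction q using Quotient.ind with
    | _ x => exact ⟨⟦x⟧, rfl⟩
  have h1 : Nat.card (Quotient s'') ≤ Nat.card (Quotient (cycleSetoid σ')) :=
    Nat.card_le_card_of_surjective F hFsurj
  -- injection from cycles of σ into Option (classes of s'')
  set G : Quotient (cycleSetoid σ) → Option (Quotient s'') :=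
    Quotient.lift (fun x => if σ.SameCycle x a then (none : Option (Quotient s''))
        else some ⟦x⟧)
      (by
        intro x y (h : (cycleSetoid σ).r x y)
        have h' : σ.SameCycle x y := h
        by_cases hxa : σ.SameCycle x a
        · rw [if_pos hxa, if_pos (h'.symm.trans hxa)]
        · rw [if_neg hxa, if_neg (fun hy => hxa (h'.trans hy))]
          exact congrArg some (Quotient.sound (Or.inl h'))) with hGdef
  have hGinj : Injective G := by
    intro q1 q2
    induction q1 using Quotient.ind with
    | _ x =>
    induction q2 using Quotient.ind with
    | _ y =>
    have hGx : G ⟦x⟧ = if σ.SameCycle x a then (none : Option (Quotient s'')) else some ⟦x⟧ :=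
      rfl
    have hGy : G ⟦y⟧ = if σ.SameCycle y a then (none : Option (Quotient s'')) else some ⟦y⟧ :=
      rfl
    intro h
    rw [hGx, hGy] at h
    by_cases hxa : σ.SameCycle x a
    · by_cases hya : σ.SameCycle y a
      · exact Quotient.sound (hxa.trans hya.symm)
      · rw [if_pos hxa, if_neg hya] at h
        exact absurd h (by simp)
    · by_cases hya : σ.SameCycle y a
      · rw [if_neg hxa, if_pos hya] at h
        exact absurd h (by simp)
      · rw [if_neg hxa, if_neg hya, Option.some_inj] at h
        have hr : s''.r x y := Quotient.exact h
        rcases hr with hr | ⟨hx, hy⟩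
        · exact Quotient.sound hr
        · rcases hx with hx | hx
          · exact absurd hx hxa
          · rcases hy with hy | hy
            · exact absurd hy hya
            · exact Quotient.sound (hx.trans hy.symm)
  haveI : Fintype (Quotient s'') := Fintype.ofFinite _
  have h2 : Nat.card (Quotient (cycleSetoid σ)) ≤ Nat.card (Quotient s'') + 1 := by
    have := Nat.card_le_card_of_injective G hGinj
    rwa [Finite.card_option] at this
  calc numCycles σ ≤ Nat.card (Quotient s'') + 1 := h2
    _ ≤ numCycles σ' + 1 := by exact Nat.add_le_add_right h1 1

/-- Splitting off a point: strictly increases the number of cycles. -/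
lemma numCycles_swap_mul_lt [Finite α] [DecidableEq α] (σ : Perm α) (a : α) (ha : σ a ≠ a) :
    numCycles σ + 1 ≤ numCycles (Equiv.swap a (σ a) * σ) := by
  classical
  set σ' := Equiv.swap a (σ a) * σ with hσ'
  have hstep : ∀ x, (cycleSetoid σ).r x (σ' x) := by
    intro x
    show σ.SameCycle x (σ' x)
    by_cases h1 : σ x = a
    · have : σ' x = σ a := by simp [hσ', Equiv.Perm.mul_apply, h1]
      rw [this]
      have hxa : σ.SameCycle x a := h1 ▸ ⟨1, by simp⟩
      exact hxa.trans ⟨1, by simp⟩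
    · by_cases h2 : σ x = σ a
      · have hx : x = a := σ.injective h2
        have : σ' x = x := by simp [hσ', Equiv.Perm.mul_apply, h2, hx]
        rw [this]
      · have : σ' x = σ x := by
          simp [hσ', Equiv.Perm.mul_apply, Equiv.swap_apply_of_ne_of_ne h1 h2]
        rw [this]
        exact ⟨1, by simp⟩
  have hle : ∀ {x y}, σ'.SameCycle x y → σ.SameCycle x y :=
    sameCycle_le_of_step σ' (cycleSetoid σ) hstep
  set F : Quotient (cycleSetoid σ') → Quotient (cycleSetoid σ) :=
    Quotient.lift (fun x => (⟦x⟧ : Quotient (cycleSetoid σ)))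
      (fun x y h => Quotient.sound (hle h)) with hF
  have hsurj : Surjective F := by
    intro q
    induction q using Quotient.ind with
    | _ x => exact ⟨⟦x⟧, rfl⟩
  have hninj : ¬ Injective F := by
    intro hinj
    have hfix : σ' a = a := by simp [hσ', Equiv.Perm.mul_apply]
    have heq : F ⟦a⟧ = F ⟦σ a⟧ := Quotient.sound (⟨1, by simp⟩ : σ.SameCycle a (σ a))
    have : (⟦a⟧ : Quotient (cycleSetoid σ')) = ⟦σ a⟧ := hinj heq
    have hsc : σ'.SameCycle a (σ a) := Quotient.exact this
    obtain ⟨i, hi⟩ := hsc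
    rw [Equiv.Perm.zpow_apply_eq_self_of_apply_eq_self hfix i] at hi
    exact ha hi.symm
  have := card_lt_of_surj_not_inj F hsurj hninj
  exact this

/-- Any product of `k` swaps has at least `card α - k` cycles. -/
lemma card_le_numCycles_prod [Finite α] [DecidableEq α] (l : List (Perm α))
    (hl : ∀ t ∈ l, Perm.IsSwap t) :
    Nat.card α ≤ numCycles l.prod + l.length := by
  induction l with
  | nil => simp [numCycles_one]
  | cons t l ih =>
    have ht := hl t List.mem_cons_self
    obtain ⟨x, y, hxy, rfl⟩ := ht
    have hrest := ih (fun u hu => hl u (List.mem_cons_of_mem _ hu))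
    have key : numCycles l.prod ≤ numCycles (Equiv.swap x y * l.prod) + 1 := by
      have h1 : numCycles l.prod = numCycles l.prod⁻¹ := (numCycles_inv l.prod).symm
      have h2 : numCycles l.prod⁻¹ ≤ numCycles (l.prod⁻¹ * Equiv.swap x y) + 1 :=
        numCycles_mul_swap_ge l.prod⁻¹ x y
      have hinv : (l.prod⁻¹ * Equiv.swap x y)⁻¹ = Equiv.swap x y * l.prod := by
        rw [mul_inv_rev, Equiv.swap_inv, inv_inv]
      have h3 : numCycles (l.prod⁻¹ * Equiv.swap x y) = numCycles (Equiv.swap x y * l.prod) := by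
        rw [← hinv, numCycles_inv]
      rw [h1, ← h3]
      exact h2
    rw [List.prod_cons, List.length_cons]
    omega

/-- Every permutation is a product of at most `card α - numCycles σ` swaps. -/
lemma exists_swap_factorization [Fintype α] [DecidableEq α] (σ : Perm α) :
    ∃ l : List (Perm α), (∀ t ∈ l, Perm.IsSwap t) ∧ l.prod = σ ∧
      l.length + numCycles σ ≤ Nat.card α := by
  classical
  generalize hk : σ.support.card = k
  induction k using Nat.strong_induction_on generalizing σ with
  | _ k ih =>
    by_cases h1 : σ = 1
    · subst h1
      exact ⟨[], by simp, by simp, by simp [numCycles_one]⟩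
    · obtain ⟨a, ha⟩ : ∃ a, σ a ≠ a := by
        by_contra h
        push_neg at h
        exact h1 (Equiv.ext h)
      set σ' := Equiv.swap a (σ a) * σ with hσ'
      have hlt : σ'.support.card < k := hk ▸ Equiv.Perm.card_support_swap_mul ha
      obtain ⟨l', hl'swap, hl'prod, hl'len⟩ := ih σ'.support.card hlt σ' rfl
      refine ⟨Equiv.swap a (σ a) :: l', ?_, ?_, ?_⟩
      · intro t ht
        rcases List.mem_cons.mp ht with h | h
        · exact h ▸ ⟨a, σ a, Ne.symm ha, rfl⟩
        · exact hl'swap t h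
      · rw [List.prod_cons, hl'prod, hσ', ← mul_assoc, Equiv.swap_mul_self, one_mul]
      · have hnc : numCycles σ + 1 ≤ numCycles σ' := numCycles_swap_mul_lt σ a ha
        simp only [List.length_cons]
        omega

end Aux

open Fin.NatCast in
/-- `finRotate` has at most one cycle. -/
lemma numCycles_finRotate_le (n : ℕ) : numCycles (finRotate n) ≤ 1 := by
  have hsub : Subsingleton (Quotient (cycleSetoid (finRotate n))) := by
    constructor
    intro q1 q2
    induction q1 using Quotient.ind with
    | _ x =>
    induction q2 using Quotient.ind with
    | _ y =>
    apply Quotient.sound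
    show (finRotate n).SameCycle x y
    match n with
    | 0 => exact absurd x.2 (by omega)
    | (m + 1) =>
      have key : ∀ (k : ℕ) (z : Fin (m + 1)), ((finRotate (m + 1)) ^ k) z = z + (k : Fin (m+1)) := by
        intro k
        induction k with
        | zero => intro z; simp
        | succ k ihk =>
          intro z
          have : (finRotate (m+1) ^ (k+1)) z = finRotate (m+1) ((finRotate (m+1) ^ k) z) := by
            rw [pow_succ', Equiv.Perm.mul_apply]
          rw [this, ihk, finRotate_succ_apply]
          push_cast
          rw [add_assoc]
      refine ⟨((y - x : Fin (m+1)).val : ℤ), ?_⟩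
      have : ((y - x : Fin (m+1)).val : ℤ) = ((y - x : Fin (m+1)).val : ℕ) := rfl
      rw [this, zpow_natCast, key]
      rw [Fin.cast_val_eq_self]
      exact add_sub_cancel x y
  rcases isEmpty_or_nonempty (Quotient (cycleSetoid (finRotate n))) with h | h
  · simp [numCycles, Nat.card_of_isEmpty]
  · have : Unique (Quotient (cycleSetoid (finRotate n))) :=
      ⟨⟨h.some⟩, fun a => Subsingleton.elim a h.some⟩
    simp [numCycles, Nat.card_unique]

/-- Biane's inequality: for any `π ∈ S_n` and the full cycle
`γ_n = (1,2,…,n)`, one has `#(π) + #(π⁻¹ γ_n) ≤ n + 1`. -/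
theorem biane_inequality {n : ℕ} (π : Equiv.Perm (Fin n)) :
    numCycles π + numCycles (π⁻¹ * finRotate n) ≤ n + 1 := by
  classical
  obtain ⟨l1, hl1swap, hl1prod, hl1len⟩ := exists_swap_factorization π
  obtain ⟨l2, hl2swap, hl2prod, hl2len⟩ := exists_swap_factorization (π⁻¹ * finRotate n)
  have hprod : (l1 ++ l2).prod = finRotate n := by
    rw [List.prod_append, hl1prod, hl2prod, ← mul_assoc, mul_inv_cancel, one_mul]
  have hswaps : ∀ t ∈ l1 ++ l2, Equiv.Perm.IsSwap t := by
    intro t ht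
    rcases List.mem_append.mp ht with h | h
    · exact hl1swap t h
    · exact hl2swap t h
  have hlower := card_le_numCycles_prod (l1 ++ l2) hswaps
  rw [hprod, List.length_append] at hlower
  have hγ : numCycles (finRotate n) ≤ 1 := numCycles_finRotate_le n
  have hcard : Nat.card (Fin n) = n := by simp
  rw [hcard] at hlower hl1len hl2len
  omega
end

section
/- For any two permutations π, γ ∈ S_n, #(π) + #(γ) + #(π⁻¹γ) ≤ n + 2·#(π ∨ γ), where π ∨ γ denotes the join in the partition lattice of the partitions induced by the cycles of π and γ. -/
section aux

open Equiv Equiv.Perm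

variable {α : Type*}

lemma cycleSetoid_rel {π : Equiv.Perm α} {x y : α} :
    (cycleSetoid π) x y ↔ π.SameCycle x y := Iff.rfl

/-- The setoid identifying `a` with `b` and nothing else. -/
def pairSetoid (a b : α) : Setoid α :=
  ⟨fun x y => x = y ∨ (x = a ∧ y = b) ∨ (x = b ∧ y = a), by
    refine ⟨fun x => Or.inl rfl, ?_, ?_⟩
    · intro x y h; tauto
    · intro x y z h1 h2
      rcases h1 with rfl | ⟨h1a, h1b⟩ | ⟨h1a, h1b⟩ <;>
        rcases h2 with rfl | ⟨h2a, h2b⟩ | ⟨h2a, h2b⟩ <;> subst_vars <;> tauto⟩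

/-- Explicit description of the sup of a setoid with a pair setoid. -/
def supPair (s : Setoid α) (a b : α) : Setoid α :=
  ⟨fun x y => s x y ∨ (s x a ∧ s b y) ∨ (s x b ∧ s a y), by
    refine ⟨fun x => Or.inl (s.refl' x), ?_, ?_⟩
    · rintro x y (h | ⟨h1, h2⟩ | ⟨h1, h2⟩)
      · exact Or.inl (s.symm' h)
      · exact Or.inr (Or.inr ⟨s.symm' h2, s.symm' h1⟩)
      · exact Or.inr (Or.inl ⟨s.symm' h2, s.symm' h1⟩)
    · rintro x y z (h | ⟨h1, h2⟩ | ⟨h1, h2⟩) (h' | ⟨h1', h2'⟩ | ⟨h1', h2'⟩)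
      · exact Or.inl (s.trans' h h')
      · exact Or.inr (Or.inl ⟨s.trans' h h1', h2'⟩)
      · exact Or.inr (Or.inr ⟨s.trans' h h1', h2'⟩)
      · exact Or.inr (Or.inl ⟨h1, s.trans' h2 h'⟩)
      · exact Or.inl (s.trans' (s.trans' h1 (s.symm' (s.trans' h2 h1'))) h2')
      · exact Or.inl (s.trans' h1 h2')
      · exact Or.inr (Or.inr ⟨h1, s.trans' h2 h'⟩)
      · exact Or.inl (s.trans' h1 h2')
      · exact Or.inl (s.trans' (s.trans' h1 (s.symm' (s.trans' h2 h1'))) h2')⟩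

lemma sup_pair_eq (s : Setoid α) (a b : α) : s ⊔ pairSetoid a b = supPair s a b := by
  apply le_antisymm
  · apply sup_le
    · intro x y h; exact Or.inl h
    · rintro x y (rfl | ⟨hxa, hyb⟩ | ⟨hxb, hya⟩)
      · exact Or.inl (s.refl' x)
      · exact Or.inr (Or.inl ⟨by rw [hxa], by rw [hyb]⟩)
      · exact Or.inr (Or.inr ⟨by rw [hxb], by rw [hya]⟩)
  · rintro x y (h | ⟨h1, h2⟩ | ⟨h1, h2⟩)
    · exact le_sup_left (α := Setoid α) h
    · have hxa : (s ⊔ pairSetoid a b) x a := le_sup_left (α := Setoid α) h1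
      have hby : (s ⊔ pairSetoid a b) b y := le_sup_left (α := Setoid α) h2
      have hab : (s ⊔ pairSetoid a b) a b :=
        le_sup_right (α := Setoid α) (Or.inr (Or.inl ⟨rfl, rfl⟩))
      exact Setoid.trans' _ (Setoid.trans' _ hxa hab) hby
    · have hxa : (s ⊔ pairSetoid a b) x b := le_sup_left (α := Setoid α) h1
      have hby : (s ⊔ pairSetoid a b) a y := le_sup_left (α := Setoid α) h2
      have hab : (s ⊔ pairSetoid a b) b a :=
        le_sup_right (α := Setoid α) (Or.inr (Or.inr ⟨rfl, rfl⟩))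
      exact Setoid.trans' _ (Setoid.trans' _ hxa hab) hby

variable [Finite α]

lemma card_quot_le {s t : Setoid α} (h : s ≤ t) :
    Nat.card (Quotient t) ≤ Nat.card (Quotient s) := by
  refine Nat.card_le_card_of_surjective
    (Quotient.map' id fun x y hxy => h hxy) fun q => ?_
  obtain ⟨x, rfl⟩ := Quotient.exists_rep q
  exact ⟨Quotient.mk'' x, rfl⟩

lemma card_quot_lt {s t : Setoid α} (h : s ≤ t) {a b : α}
    (hab : t a b) (hnab : ¬ s a b) :
    Nat.card (Quotient t) < Nat.card (Quotient s) := by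
  set f : Quotient s → Quotient t := Quotient.map' id fun x y hxy => h hxy with hf
  have hsurj : Function.Surjective f := by
    intro q; obtain ⟨x, rfl⟩ := Quotient.exists_rep q; exact ⟨Quotient.mk'' x, rfl⟩
  refine lt_of_le_of_ne (card_quot_le h) fun hcard => ?_
  have hbij : Function.Bijective f :=
    (Nat.bijective_iff_surjective_and_card f).mpr ⟨hsurj, hcard.symm⟩
  have h1 : f (Quotient.mk'' a) = f (Quotient.mk'' b) := Quotient.sound' hab
  have h2 : (Quotient.mk'' a : Quotient s) = Quotient.mk'' b := hbij.injective h1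
  exact hnab (Quotient.eq''.mp h2)

lemma card_quot_le_sup_pair_add_one (s : Setoid α) (a b : α) :
    Nat.card (Quotient s) ≤ Nat.card (Quotient (s ⊔ pairSetoid a b)) + 1 := by
  classical
  rw [sup_pair_eq]
  set t := supPair s a b with ht
  set g : α → Quotient t ⊕ Unit :=
    fun x => if s x a then Sum.inr () else Sum.inl (Quotient.mk t x) with hg
  have hgwd : ∀ x y, s x y → g x = g y := by
    intro x y hxy
    by_cases hx : s x a
    · rw [hg]; dsimp only
      rw [if_pos hx, if_pos (s.trans' (s.symm' hxy) hx)]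
    · rw [hg]; dsimp only
      rw [if_neg hx, if_neg (fun hy => hx (s.trans' hxy hy))]
      exact congrArg Sum.inl (Quotient.sound (Or.inl hxy))
  set f : Quotient s → Quotient t ⊕ Unit := Quotient.lift g hgwd with hf
  have hinj : Function.Injective f := by
    intro q1 q2
    obtain ⟨x, rfl⟩ := Quotient.exists_rep q1
    obtain ⟨y, rfl⟩ := Quotient.exists_rep q2
    have hfx : f (Quotient.mk s x) = g x := rfl
    have hfy : f (Quotient.mk s y) = g y := rfl
    rw [hfx, hfy, hg]; dsimp only
    by_cases hx : s x a <;> by_cases hy : s y a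
    · rw [if_pos hx, if_pos hy]
      intro _; exact Quotient.sound (s.trans' hx (s.symm' hy))
    · rw [if_pos hx, if_neg hy]
      intro hc; exact absurd hc (by simp)
    · rw [if_neg hx, if_pos hy]
      intro hc; exact absurd hc (by simp)
    · rw [if_neg hx, if_neg hy]
      intro hc
      have hrel : t x y := Quotient.exact (Sum.inl.inj hc)
      rcases hrel with h | ⟨h1, _⟩ | ⟨_, h2⟩
      · exact Quotient.sound h
      · exact absurd h1 hx
      · exact absurd (s.symm' h2) hy
  calc Nat.card (Quotient s) ≤ Nat.card (Quotient t ⊕ Unit) :=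
        Nat.card_le_card_of_injective f hinj
    _ = Nat.card (Quotient t) + 1 := by
        rw [Nat.card_sum]; simp

lemma card_quot_bot : Nat.card (Quotient (⊥ : Setoid α)) = Nat.card α := by
  refine (Nat.card_congr (Equiv.ofBijective (Quotient.mk _) ⟨?_, Quotient.exists_rep⟩)).symm
  intro x y hxy
  have h1 : (⊥ : Setoid α) x y := Quotient.eq''.mp hxy
  rwa [show ((⊥ : Setoid α) x y) = (x = y) from congrFun (congrFun Setoid.bot_def x) y] at h1

end aux

section cyc

open Equiv Equiv.Perm

variable {α : Type*}

lemma sameCycle_apply_self (ρ : Equiv.Perm α) (x : α) : ρ.SameCycle x (ρ x) :=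
  ⟨1, by simp⟩

lemma cycleSetoid_le {ρ : Equiv.Perm α} {s : Setoid α} (h : ∀ x, s x (ρ x)) :
    cycleSetoid ρ ≤ s := by
  intro x y hxy
  obtain ⟨i, rfl⟩ := hxy
  induction i using Int.induction_on with
  | zero => simpa using s.refl' x
  | succ i ih =>
      have heq : (ρ ^ ((i : ℤ) + 1)) x = ρ ((ρ ^ (i : ℤ)) x) := by
        rw [show (i : ℤ) + 1 = 1 + (i : ℤ) by ring, zpow_add, zpow_one,
          Equiv.Perm.mul_apply]
      rw [heq]
      exact s.trans' ih (h _)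
  | pred i ih =>
      have heq : (ρ ^ (-(i : ℤ) - 1)) x = ρ⁻¹ ((ρ ^ (-(i : ℤ))) x) := by
        rw [show -(i : ℤ) - 1 = -1 + -(i : ℤ) by ring, zpow_add, zpow_neg_one,
          Equiv.Perm.mul_apply]
      rw [heq]
      refine s.trans' ih (s.symm' ?_)
      have h2 := h (ρ⁻¹ ((ρ ^ (-(i : ℤ))) x))
      rwa [show ρ (ρ⁻¹ ((ρ ^ (-(i : ℤ))) x)) = (ρ ^ (-(i : ℤ))) x from
        Equiv.apply_symm_apply ρ _] at h2

lemma pair_rel_swap [DecidableEq α] {a b : α} (s : Setoid α) (hab : s a b) (z : α) :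
    s z (Equiv.swap a b z) := by
  rcases eq_or_ne z a with rfl | hza
  · rwa [Equiv.swap_apply_left]
  rcases eq_or_ne z b with rfl | hzb
  · rw [Equiv.swap_apply_right]; exact s.symm' hab
  · rw [Equiv.swap_apply_of_ne_of_ne hza hzb]

lemma cycleSetoid_swap_mul_le [DecidableEq α] {ρ : Equiv.Perm α} {a b : α} {s : Setoid α}
    (hρ : cycleSetoid ρ ≤ s) (hab : s a b) :
    cycleSetoid (Equiv.swap a b * ρ) ≤ s :=
  cycleSetoid_le fun x =>
    s.trans' (hρ (sameCycle_apply_self ρ x)) (pair_rel_swap s hab (ρ x))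

lemma sameCycle_swap_mul [DecidableEq α] [Finite α] {ρ : Equiv.Perm α} {a b : α} (hab : a ≠ b)
    (h : ¬ ρ.SameCycle a b) : ((Equiv.swap a b) * ρ).SameCycle a b := by
  have horder : Function.IsPeriodicPt ρ (orderOf ρ) a := by
    show ρ^[orderOf ρ] a = a
    rw [Equiv.Perm.iterate_eq_pow, pow_orderOf_eq_one]; rfl
  set m := Function.minimalPeriod ρ a with hm
  have hmpos : 0 < m := horder.minimalPeriod_pos (orderOf_pos ρ)
  have key : ∀ j, j < m → ((Equiv.swap a b * ρ) ^ j) a = (ρ ^ j) a := by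
    intro j
    induction j with
    | zero => intro _; simp
    | succ j ih =>
        intro hj
        have hj' : j < m := Nat.lt_of_succ_lt hj
        have h1 : ((Equiv.swap a b * ρ) ^ (j + 1)) a
            = (Equiv.swap a b) (ρ ((ρ ^ j) a)) := by
          rw [pow_succ', Equiv.Perm.mul_apply, ih hj', Equiv.Perm.mul_apply]
        have hne_a : ρ ((ρ ^ j) a) ≠ a := by
          intro hcon
          have hper : Function.IsPeriodicPt ρ (j + 1) a := by
            show ρ^[j + 1] a = a
            rw [Equiv.Perm.iterate_eq_pow, pow_succ', Equiv.Perm.mul_apply]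
            exact hcon
          exact absurd (hper.minimalPeriod_le (Nat.succ_pos j)) (by omega)
        have hne_b : ρ ((ρ ^ j) a) ≠ b := by
          intro hcon
          exact h ⟨((j : ℤ) + 1), by
            rw [show ((j : ℤ) + 1) = ((j + 1 : ℕ) : ℤ) by push_cast; ring,
              zpow_natCast, pow_succ', Equiv.Perm.mul_apply]
            exact hcon⟩
        rw [h1, Equiv.swap_apply_of_ne_of_ne hne_a hne_b, ← Equiv.Perm.mul_apply ρ,
          ← pow_succ']
  obtain ⟨k, hk⟩ : ∃ k, m = k + 1 := ⟨m - 1, (Nat.succ_pred_eq_of_pos hmpos).symm⟩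
  refine ⟨(m : ℤ), ?_⟩
  have hma : (ρ ^ m) a = a := by
    have h2 : ρ^[m] a = a := Function.iterate_minimalPeriod
    rwa [Equiv.Perm.iterate_eq_pow] at h2
  rw [zpow_natCast, hk, pow_succ', Equiv.Perm.mul_apply, key k (by omega),
    Equiv.Perm.mul_apply, ← Equiv.Perm.mul_apply ρ, ← pow_succ', ← hk, hma,
    Equiv.swap_apply_left]

variable [Finite α]

lemma numCycles_swap_mul_lt_s4 [DecidableEq α] {ρ : Equiv.Perm α} {a b : α} (hab : a ≠ b)
    (h : ¬ ρ.SameCycle a b) :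
    numCycles (Equiv.swap a b * ρ) < numCycles ρ := by
  have hab' : ((Equiv.swap a b) * ρ).SameCycle a b := sameCycle_swap_mul hab h
  have hle : cycleSetoid ρ ≤ cycleSetoid (Equiv.swap a b * ρ) := by
    have hself : cycleSetoid (Equiv.swap a b * ρ) ≤ cycleSetoid (Equiv.swap a b * ρ) := le_rfl
    have := cycleSetoid_swap_mul_le (ρ := Equiv.swap a b * ρ)
      (s := cycleSetoid (Equiv.swap a b * ρ)) hself hab'
    rwa [Equiv.swap_mul_self_mul] at this
  exact card_quot_lt hle hab' h

lemma numCycles_swap_mul_le [DecidableEq α] {ρ : Equiv.Perm α} {a b : α} (hab : a ≠ b) :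
    numCycles (Equiv.swap a b * ρ) ≤ numCycles ρ + 1 := by
  have hpair : (cycleSetoid (Equiv.swap a b * ρ) ⊔ pairSetoid a b) a b :=
    le_sup_right (α := Setoid α) (Or.inr (Or.inl ⟨rfl, rfl⟩))
  have h1 : cycleSetoid ρ ≤ cycleSetoid (Equiv.swap a b * ρ) ⊔ pairSetoid a b := by
    have := cycleSetoid_swap_mul_le (ρ := Equiv.swap a b * ρ)
      (s := cycleSetoid (Equiv.swap a b * ρ) ⊔ pairSetoid a b)
      (le_sup_left (α := Setoid α)) hpair
    rwa [Equiv.swap_mul_self_mul] at this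
  calc numCycles (Equiv.swap a b * ρ)
      ≤ Nat.card (Quotient (cycleSetoid (Equiv.swap a b * ρ) ⊔ pairSetoid a b)) + 1 :=
        card_quot_le_sup_pair_add_one _ a b
    _ ≤ numCycles ρ + 1 := by
        exact Nat.add_le_add_right (card_quot_le h1) 1

lemma cycleSetoid_one : cycleSetoid (1 : Equiv.Perm α) = ⊥ := by
  apply le_antisymm
  · intro x y hxy
    have h1 : x = y := by
      obtain ⟨i, hi⟩ := hxy
      simpa using hi
    rw [show ((⊥ : Setoid α) x y) = (x = y) from congrFun (congrFun Setoid.bot_def x) y]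
    exact h1
  · intro x y hxy
    have h1 : x = y := by
      rwa [show ((⊥ : Setoid α) x y) = (x = y) from congrFun (congrFun Setoid.bot_def x) y]
        at hxy
    exact h1 ▸ Equiv.Perm.SameCycle.refl _ x

lemma cycleSetoid_inv (π : Equiv.Perm α) : cycleSetoid π⁻¹ = cycleSetoid π :=
  Setoid.ext fun x y => Equiv.Perm.sameCycle_inv

lemma numCycles_le_card (ρ : Equiv.Perm α) : numCycles ρ ≤ Nat.card α := by
  have := card_quot_le (s := (⊥ : Setoid α)) (t := cycleSetoid ρ) bot_le
  rwa [card_quot_bot] at this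

lemma numCycles_lt_card {ρ : Equiv.Perm α} {a : α} (ha : ρ a ≠ a) :
    numCycles ρ < Nat.card α := by
  have hlt := card_quot_lt (s := (⊥ : Setoid α)) (t := cycleSetoid ρ) bot_le
    (a := a) (b := ρ a) (sameCycle_apply_self ρ a)
    (by rw [show ((⊥ : Setoid α) a (ρ a)) = (a = ρ a) from
      congrFun (congrFun Setoid.bot_def a) (ρ a)]; exact fun hc => ha hc.symm)
  rwa [card_quot_bot] at hlt

end cyc

section main

open Equiv Equiv.Perm

lemma numCycles_one_s4 (n : ℕ) : numCycles (1 : Equiv.Perm (Fin n)) = n := by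
  unfold numCycles
  rw [cycleSetoid_one, card_quot_bot, Nat.card_eq_fintype_card, Fintype.card_fin]

lemma numCycles_inv_s4 {α : Type*} [Finite α] (π : Equiv.Perm α) : numCycles π⁻¹ = numCycles π := by
  unfold numCycles
  rw [cycleSetoid_inv]

lemma mingo_nica_base {n : ℕ} (π : Equiv.Perm (Fin n)) :
    numCycles π + numCycles (1 : Equiv.Perm (Fin n)) + numCycles (π⁻¹ * 1) ≤
      n + 2 * Nat.card (Quotient (cycleSetoid π ⊔ cycleSetoid (1 : Equiv.Perm (Fin n)))) := by
  rw [numCycles_one_s4, mul_one, numCycles_inv_s4, cycleSetoid_one, sup_bot_eq]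
  show numCycles π + n + numCycles π ≤ n + 2 * numCycles π
  omega

lemma mingo_nica_aux {n : ℕ} :
    ∀ k (π γ : Equiv.Perm (Fin n)), n - numCycles γ ≤ k →
    numCycles π + numCycles γ + numCycles (π⁻¹ * γ) ≤
      n + 2 * Nat.card (Quotient (cycleSetoid π ⊔ cycleSetoid γ)) := by
  intro k
  induction k with
  | zero =>
      intro π γ hk
      rcases eq_or_ne γ 1 with rfl | hγ1
      · exact mingo_nica_base π
      · exfalso
        obtain ⟨a, ha⟩ : ∃ a, γ a ≠ a := by
          by_contra hcon
          push_neg at hcon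
          exact hγ1 (Equiv.ext hcon)
        have hlt := numCycles_lt_card (ρ := γ) ha
        rw [Nat.card_eq_fintype_card, Fintype.card_fin] at hlt
        omega
  | succ k ih =>
      intro π γ hk
      rcases eq_or_ne γ 1 with rfl | hγ1
      · exact mingo_nica_base π
      obtain ⟨a, ha⟩ : ∃ a, γ a ≠ a := by
        by_contra hcon
        push_neg at hcon
        exact hγ1 (Equiv.ext hcon)
      set b := γ a with hb
      have hab : a ≠ b := fun h => ha h.symm
      set γ' := Equiv.swap a b * γ with hγ'def
      have hγ' : Equiv.swap a b * γ' = γ := Equiv.swap_mul_self_mul a b γ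
      have hfix : γ' a = a := by
        show (Equiv.swap a b) (γ a) = a
        rw [← hb, Equiv.swap_apply_right]
      have hnsc : ¬ γ'.SameCycle a b := by
        rintro ⟨i, hi⟩
        rw [Equiv.Perm.zpow_apply_eq_self_of_apply_eq_self hfix i] at hi
        exact hab hi
      have hG : numCycles γ + 1 ≤ numCycles γ' := by
        have := numCycles_swap_mul_lt_s4 (ρ := γ') hab hnsc
        rw [hγ'] at this
        omega
      have hG'n : numCycles γ' ≤ n := by
        have := numCycles_le_card γ'
        rwa [Nat.card_eq_fintype_card, Fintype.card_fin] at this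
      have hmeas : n - numCycles γ' ≤ k := by omega
      have IH := ih π γ' hmeas
      set a' := π⁻¹ a with ha'
      set b' := π⁻¹ b with hb'
      have ha'b' : a' ≠ b' := fun h => hab (Equiv.injective π⁻¹ h)
      have hσ : π⁻¹ * γ = Equiv.swap a' b' * (π⁻¹ * γ') := by
        rw [ha', hb', Equiv.swap_apply_apply, ← hγ']
        group
      set J' := cycleSetoid π ⊔ cycleSetoid γ' with hJ'
      have hπa : ∀ z : Fin n, J' z (π⁻¹ z) := fun z =>
        (le_sup_left (α := Setoid (Fin n)) (b := cycleSetoid γ')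
          (⟨-1, zpow_neg_one π ▸ rfl⟩ : π.SameCycle z (π⁻¹ z)))
      have hσ'J' : cycleSetoid (π⁻¹ * γ') ≤ J' := by
        refine cycleSetoid_le fun x => ?_
        have t1 : J' x (γ' x) :=
          le_sup_right (α := Setoid (Fin n)) (sameCycle_apply_self γ' x)
        exact J'.trans' t1 (hπa (γ' x))
      by_cases hsc : (π⁻¹ * γ').SameCycle a' b'
      · -- same cycle: numCycles can only go up by 1, and the join is unchanged
        have hS : numCycles (π⁻¹ * γ) ≤ numCycles (π⁻¹ * γ') + 1 := by
          rw [hσ]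
          exact numCycles_swap_mul_le ha'b'
        have hJ'ab : J' a b := by
          refine J'.trans' (J'.trans' (hπa a) (hσ'J' hsc)) (J'.symm' (hπa b))
        have hγJ' : cycleSetoid γ ≤ J' := by
          rw [← hγ']
          exact cycleSetoid_swap_mul_le (le_sup_right (α := Setoid (Fin n))) hJ'ab
        have hJle : cycleSetoid π ⊔ cycleSetoid γ ≤ J' :=
          sup_le le_sup_left hγJ'
        have hJ := card_quot_le hJle
        omega
      · -- different cycles: numCycles goes down, join loses at most one block
        have hS : numCycles (π⁻¹ * γ) + 1 ≤ numCycles (π⁻¹ * γ') := by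
          have := numCycles_swap_mul_lt_s4 (ρ := π⁻¹ * γ') ha'b' hsc
          rw [← hσ] at this
          omega
        have hpair : (J' ⊔ pairSetoid a b) a b :=
          le_sup_right (α := Setoid (Fin n)) (Or.inr (Or.inl ⟨rfl, rfl⟩))
        have hγJ'p : cycleSetoid γ ≤ J' ⊔ pairSetoid a b := by
          rw [← hγ']
          exact cycleSetoid_swap_mul_le
            (le_trans (le_sup_right (a := cycleSetoid π)) le_sup_left) hpair
        have hJle2 : cycleSetoid π ⊔ cycleSetoid γ ≤ J' ⊔ pairSetoid a b :=
          sup_le (le_trans le_sup_left le_sup_left) hγJ'p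
        have hJ1 : Nat.card (Quotient J')
            ≤ Nat.card (Quotient (J' ⊔ pairSetoid a b)) + 1 :=
          card_quot_le_sup_pair_add_one J' a b
        have hJ2 := card_quot_le hJle2
        omega

end main

/-- For any two permutations `π, γ ∈ S_n`,
`#(π) + #(γ) + #(π⁻¹γ) ≤ n + 2·#(π ∨ γ)`, where `π ∨ γ` is the join in the
partition lattice of the cycle partitions of `π` and `γ`. -/
theorem mingo_nica_inequality {n : ℕ} (π γ : Equiv.Perm (Fin n)) :
    numCycles π + numCycles γ + numCycles (π⁻¹ * γ) ≤
      n + 2 * Nat.card (Quotient (cycleSetoid π ⊔ cycleSetoid γ)) :=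
  mingo_nica_aux (n - numCycles γ) π γ le_rfl
end

section
/- Let G be a labelled oriented graph with elementarization Ḡ and let (τ,∼) be an oriented partition of the edges of Ḡ such that every loop of Ḡ forms a singleton block of τ. If the bipartite graph G(τ) — with white vertices the connected components of G, black vertices the blocks of τ, and one edge for each edge of Ḡ joining its component to its block — is a tree, then the induced vertex partition satisfies #(τ∼) = |V| − 2(c − 1), where c is the number of connected components of G. -/
/-- Two oriented edges are elementarily equivalent when they connect the same
(unordered) pair of vertices. -/
def sameEnds {V E : Type*} (src trg : E → V) (e e' : E) : Prop :=
  ({src e, trg e} : Set V) = {src e', trg e'}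

/-- The setoid on the edges whose classes are the edges of the
elementarization `Ḡ`. -/
def sameEndsSetoid {V E : Type*} (src trg : E → V) : Setoid E :=
  ⟨sameEnds src trg, ⟨fun _ => rfl, fun h => h.symm, fun h1 h2 => h1.trans h2⟩⟩

/-- An oriented partition of the edges of (the elementarization of) the
labelled oriented graph with edge-endpoint maps `src`, `trg`: a partition
`rel` of the edges whose blocks are unions of elementarization classes,
together with, for each block, an identification of its edges determined by a
choice of orientation `ori` of each elementary edge. -/
structure OrientedEdgePartition {V E : Type*} (src trg : E → V) where
  /-- the partition of the (elementarized) edges -/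
  rel : Setoid E
  sameEnds_le : ∀ e e', sameEnds src trg e e' → rel e e'
  /-- chosen orientation of each elementary edge -/
  ori : E → V × V
  ori_spec : ∀ e, ori e = (src e, trg e) ∨ ori e = (trg e, src e)
  ori_const : ∀ e e', sameEnds src trg e e' → ori e = ori e'

/-- The vertex partition induced by an oriented partition of the edges:
the equivalence generated by identifying, for any two edges in the same
block, their first endpoints and their second endpoints (in the chosen
orientations). -/
def OrientedEdgePartition.vertexSetoid {V E : Type*} {src trg : E → V}
    (P : OrientedEdgePartition src trg) : Setoid V :=
  Relation.EqvGen.setoid (fun u v => ∃ e e', P.rel e e' ∧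
    ((u = (P.ori e).1 ∧ v = (P.ori e').1) ∨ (u = (P.ori e).2 ∧ v = (P.ori e').2)))

/-- The setoid on the vertices whose classes are the connected components of
the graph. -/
def compSetoid {V E : Type*} (src trg : E → V) : Setoid V :=
  Relation.EqvGen.setoid (fun u v => ∃ e, u = src e ∧ v = trg e)

/-- The connected component of (the endpoints of) an elementarized edge. -/
def edgeComp {V E : Type*} (src trg : E → V) :
    Quotient (sameEndsSetoid src trg) → Quotient (compSetoid src trg) :=
  Quotient.lift (fun e => Quotient.mk (compSetoid src trg) (src e)) (by
    intro e e' (h : sameEnds src trg e e')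
    have h1 : src e' ∈ ({src e, trg e} : Set V) := by
      rw [h]; exact Set.mem_insert _ _
    rcases h1 with h1 | h1
    · show Quotient.mk _ (src e) = Quotient.mk _ (src e')
      rw [h1]
    · exact Quotient.sound (by
        rw [h1]
        exact Relation.EqvGen.rel _ _ ⟨e, rfl, rfl⟩))

/-- The block of an elementarized edge under an oriented partition of the
edges. -/
def edgeBlock {V E : Type*} {src trg : E → V}
    (P : OrientedEdgePartition src trg) :
    Quotient (sameEndsSetoid src trg) → Quotient P.rel :=
  Quotient.lift (fun e => Quotient.mk P.rel e)
    (fun e e' h => Quotient.sound (P.sameEnds_le e e' h))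

/-- The bipartite multigraph with white vertices `α`, black vertices `β`
and one edge for each element of `ε`, with endpoints `f e` and `g e`;
recorded as a simple graph for connectivity purposes. -/
def bipGraph {α β ε : Type*} (f : ε → α) (g : ε → β) : SimpleGraph (α ⊕ β) where
  Adj x y := ∃ e, (x = Sum.inl (f e) ∧ y = Sum.inr (g e)) ∨
    (y = Sum.inl (f e) ∧ x = Sum.inr (g e))
  symm := by
    constructor
    rintro x y ⟨e, h | h⟩
    · exact ⟨e, Or.inr h⟩
    · exact ⟨e, Or.inl h⟩
  loopless := by
    constructor
    rintro x ⟨e, ⟨h1, h2⟩ | ⟨h1, h2⟩⟩ <;> subst h1 <;> simp at h2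

/-- The bipartite multigraph with edge set `ε` and endpoint maps `f`, `g` is a
tree: connected, and the number of vertices exceeds the number of edges by 1. -/
def isTreeBip {α β ε : Type*} (f : ε → α) (g : ε → β) : Prop :=
  (bipGraph f g).Connected ∧ Nat.card (α ⊕ β) = Nat.card ε + 1


section SetoidLemmas

variable {α : Type*}

lemma eqvGen_le_setoid {r : α → α → Prop} {s : Setoid α} (h : ∀ x y, r x y → s x y) :
    ∀ x y, Relation.EqvGen r x y → s x y := by
  intro x y hxy
  induction hxy with
  | rel a b hab => exact h a b hab
  | refl a => exact s.iseqv.refl a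
  | symm a b _ ih => exact s.iseqv.symm ih
  | trans a b c _ _ ih1 ih2 => exact s.iseqv.trans ih1 ih2

/-- The setoid obtained from `t` by additionally identifying `p` and `q`. -/
def addPairSetoid (t : Setoid α) (p q : α) : Setoid α :=
  Relation.EqvGen.setoid (fun u v => t u v ∨ (u = p ∧ v = q))

lemma addPairSetoid_le_base (t : Setoid α) (p q u v : α) (h : t u v) :
    addPairSetoid t p q u v :=
  Relation.EqvGen.rel u v (Or.inl h)

lemma addPairSetoid_pair (t : Setoid α) (p q : α) : addPairSetoid t p q p q :=
  Relation.EqvGen.rel p q (Or.inr ⟨rfl, rfl⟩)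

lemma addPairSetoid_iff (t : Setoid α) (p q x y : α) :
    addPairSetoid t p q x y ↔ t x y ∨ (t x p ∧ t q y) ∨ (t x q ∧ t p y) := by
  constructor
  · intro h
    have h' : Relation.EqvGen (fun u v => t u v ∨ (u = p ∧ v = q)) x y := h
    clear h
    induction h' with
    | rel a b hab =>
      rcases hab with hab | ⟨rfl, rfl⟩
      · exact Or.inl hab
      · exact Or.inr (Or.inl ⟨t.iseqv.refl _, t.iseqv.refl _⟩)
    | refl a => exact Or.inl (t.iseqv.refl a)
    | symm a b _ ih =>
      rcases ih with h1 | ⟨h1, h2⟩ | ⟨h1, h2⟩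
      · exact Or.inl (t.iseqv.symm h1)
      · exact Or.inr (Or.inr ⟨t.iseqv.symm h2, t.iseqv.symm h1⟩)
      · exact Or.inr (Or.inl ⟨t.iseqv.symm h2, t.iseqv.symm h1⟩)
    | trans a b c _ _ ih1 ih2 =>
      rcases ih1 with h1 | ⟨h1, h2⟩ | ⟨h1, h2⟩ <;>
        rcases ih2 with h3 | ⟨h3, h4⟩ | ⟨h3, h4⟩
      · exact Or.inl (t.iseqv.trans h1 h3)
      · exact Or.inr (Or.inl ⟨t.iseqv.trans h1 h3, h4⟩)
      · exact Or.inr (Or.inr ⟨t.iseqv.trans h1 h3, h4⟩)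
      · exact Or.inr (Or.inl ⟨h1, t.iseqv.trans h2 h3⟩)
      · exact Or.inl (t.iseqv.trans h1 (t.iseqv.trans (t.iseqv.symm (t.iseqv.trans h2 h3)) h4))
      · exact Or.inl (t.iseqv.trans h1 h4)
      · exact Or.inr (Or.inr ⟨h1, t.iseqv.trans h2 h3⟩)
      · exact Or.inl (t.iseqv.trans h1 h4)
      · exact Or.inl (t.iseqv.trans h1 (t.iseqv.trans (t.iseqv.symm (t.iseqv.trans h2 h3)) h4))
  · intro h
    rcases h with h | ⟨h1, h2⟩ | ⟨h1, h2⟩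
    · exact addPairSetoid_le_base t p q _ _ h
    · exact (addPairSetoid t p q).iseqv.trans (addPairSetoid_le_base t p q _ _ h1)
        ((addPairSetoid t p q).iseqv.trans (addPairSetoid_pair t p q)
          (addPairSetoid_le_base t p q _ _ h2))
    · exact (addPairSetoid t p q).iseqv.trans (addPairSetoid_le_base t p q _ _ h1)
        ((addPairSetoid t p q).iseqv.trans ((addPairSetoid t p q).iseqv.symm
          (addPairSetoid_pair t p q)) (addPairSetoid_le_base t p q _ _ h2))

lemma card_addPairSetoid [Finite α] (t : Setoid α) (p q : α) (h : ¬ t p q) :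
    Nat.card (Quotient t) = Nat.card (Quotient (addPairSetoid t p q)) + 1 := by
  classical
  set t' := addPairSetoid t p q with ht'
  have hwf : ∀ a b : α, t a b →
      (if t a q then (Sum.inr () : Quotient t' ⊕ Unit) else Sum.inl (Quotient.mk t' a)) =
      (if t b q then (Sum.inr () : Quotient t' ⊕ Unit) else Sum.inl (Quotient.mk t' b)) := by
    intro a b hab
    by_cases haq : t a q
    · have hbq : t b q := t.iseqv.trans (t.iseqv.symm hab) haq
      simp [haq, hbq]
    · have hbq : ¬ t b q := fun hb => haq (t.iseqv.trans hab hb)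
      simp only [haq, hbq, if_false]
      exact congrArg Sum.inl (Quotient.sound (addPairSetoid_le_base t p q _ _ hab))
  let f : Quotient t → Quotient t' ⊕ Unit := Quotient.lift _ hwf
  have hbij : Function.Bijective f := by
    constructor
    · intro x y
      refine Quotient.inductionOn₂ x y ?_
      intro a b hab
      by_cases haq : t a q <;> by_cases hbq : t b q <;>
        simp only [f, Quotient.lift_mk, haq, hbq, if_true, if_false] at hab
      · exact Quotient.sound (t.iseqv.trans haq (t.iseqv.symm hbq))
      · exact absurd hab (by simp)
      · exact absurd hab (by simp)
      · have hab' := Quotient.exact (Sum.inl.inj hab)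
        rcases (addPairSetoid_iff t p q a b).1 hab' with h1 | ⟨h1, h2⟩ | ⟨h1, h2⟩
        · exact Quotient.sound h1
        · exact absurd (t.iseqv.symm h2) hbq
        · exact absurd h1 haq
    · rintro (y | ⟨⟩)
      · refine Quotient.inductionOn y ?_
        intro b
        by_cases hbq : t b q
        · refine ⟨Quotient.mk t p, ?_⟩
          simp only [f, Quotient.lift_mk, h, if_false]
          refine congrArg Sum.inl (Quotient.sound ?_)
          exact (addPairSetoid_iff t p q p b).2
            (Or.inr (Or.inl ⟨t.iseqv.refl p, t.iseqv.symm hbq⟩))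
        · exact ⟨Quotient.mk t b, by simp only [f, Quotient.lift_mk, hbq, if_false]⟩
      · exact ⟨Quotient.mk t q, by simp only [f, Quotient.lift_mk, t.iseqv.refl q, if_true]⟩
  calc Nat.card (Quotient t) = Nat.card (Quotient t' ⊕ Unit) := Nat.card_eq_of_bijective f hbij
  _ = Nat.card (Quotient t') + 1 := by simp [Nat.card_sum]

/-- Refine a setoid by a predicate `K`. -/
def splitSetoid (s : Setoid α) (K : α → Prop) : Setoid α :=
  ⟨fun x y => s x y ∧ (K x ↔ K y),
   ⟨fun x => ⟨s.iseqv.refl x, Iff.rfl⟩,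
    fun h => ⟨s.iseqv.symm h.1, h.2.symm⟩,
    fun h1 h2 => ⟨s.iseqv.trans h1.1 h2.1, h1.2.trans h2.2⟩⟩⟩

lemma card_splitSetoid [Finite α] (s : Setoid α) (K : α → Prop) (a b : α)
    (hab : s a b) (ha : K a) (hb : ¬ K b) (hK : ∀ x, K x → s x a) :
    Nat.card (Quotient (splitSetoid s K)) = Nat.card (Quotient s) + 1 := by
  classical
  set s' := splitSetoid s K with hs'
  have hwf : ∀ x y : α, (splitSetoid s K) x y →
      (if K x then (Sum.inr () : Quotient s ⊕ Unit) else Sum.inl (Quotient.mk s x)) =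
      (if K y then (Sum.inr () : Quotient s ⊕ Unit) else Sum.inl (Quotient.mk s y)) := by
    rintro x y ⟨hxy, hKxy⟩
    by_cases hx : K x
    · simp [hx, hKxy.1 hx]
    · have hy : ¬ K y := fun h => hx (hKxy.2 h)
      simp only [hx, hy, if_false]
      exact congrArg Sum.inl (Quotient.sound hxy)
  let f : Quotient s' → Quotient s ⊕ Unit := Quotient.lift _ hwf
  have hbij : Function.Bijective f := by
    constructor
    · intro x y
      refine Quotient.inductionOn₂ x y ?_
      intro u v huv
      by_cases hu : K u <;> by_cases hv : K v <;>
        simp only [f, Quotient.lift_mk, hu, hv, if_true, if_false] at huv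
      · exact Quotient.sound (⟨s.iseqv.trans (hK u hu) (s.iseqv.symm (hK v hv)),
          iff_of_true hu hv⟩ : (splitSetoid s K) u v)
      · exact absurd huv (by simp)
      · exact absurd huv (by simp)
      · exact Quotient.sound (⟨Quotient.exact (Sum.inl.inj huv), iff_of_false hu hv⟩ :
          (splitSetoid s K) u v)
    · rintro (y | ⟨⟩)
      · refine Quotient.inductionOn y ?_
        intro x
        by_cases hx : K x
        · refine ⟨Quotient.mk s' b, ?_⟩
          simp only [f, Quotient.lift_mk, hb, if_false]
          exact congrArg Sum.inl
            (Quotient.sound (s.iseqv.trans (s.iseqv.symm hab) (s.iseqv.symm (hK x hx))))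
        · exact ⟨Quotient.mk s' x, by simp only [f, Quotient.lift_mk, hx, if_false]⟩
      · exact ⟨Quotient.mk s' a, by simp only [f, Quotient.lift_mk, ha, if_true]⟩
  calc Nat.card (Quotient s') = Nat.card (Quotient s ⊕ Unit) := Nat.card_eq_of_bijective f hbij
  _ = Nat.card (Quotient s) + 1 := by simp [Nat.card_sum]

lemma card_quotient_of_eq [Finite α] (t : Setoid α) (h : ∀ x y : α, t x y → x = y) :
    Nat.card (Quotient t) = Nat.card α := by
  refine (Nat.card_eq_of_bijective (Quotient.mk t) ?_).symm
  exact ⟨fun a b hab => h a b (Quotient.exact hab), Quotient.mk_surjective⟩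

end SetoidLemmas
section ForestLemmas

open SimpleGraph

/-- The bipartite multigraph with the edge indexed `e₀` deleted. -/
abbrev delBip {α β ε : Type*} (f : ε → α) (g : ε → β) (e₀ : ε) : SimpleGraph (α ⊕ β) :=
  bipGraph (fun e : {e : ε // e ≠ e₀} => f e.1) (fun e => g e.1)

/-- The bipartite multigraph is a forest: every edge is a bridge. -/
def isForestBip {α β ε : Type*} (f : ε → α) (g : ε → β) : Prop :=
  ∀ e₀ : ε, ¬ (delBip f g e₀).Reachable (Sum.inl (f e₀)) (Sum.inr (g e₀))

lemma reachable_map_black {α β β' ε : Type*} {f : ε → α} {g : ε → β} {g₂ : ε → β'}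
    (φ : β → β') (hφ : ∀ e, φ (g e) = g₂ e) {x y : α ⊕ β}
    (h : (bipGraph f g).Reachable x y) :
    (bipGraph f g₂).Reachable (Sum.map id φ x) (Sum.map id φ y) := by
  refine SimpleGraph.Reachable.map ⟨Sum.map id φ, ?_⟩ h
  rintro a b ⟨e, ⟨h1, h2⟩ | ⟨h1, h2⟩⟩ <;> subst h1 <;> subst h2
  · exact ⟨e, Or.inl ⟨rfl, by simp [hφ]⟩⟩
  · exact ⟨e, Or.inr ⟨rfl, by simp [hφ]⟩⟩

lemma card_compl_add_one {γ : Type*} [Finite γ] (x₀ : γ) :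
    Nat.card {v : γ // v ≠ x₀} + 1 = Nat.card γ := by
  classical
  show Nat.card {v : γ // ¬ v = x₀} + 1 = Nat.card γ
  have h1 : Nat.card ({v : γ // v = x₀} ⊕ {v : γ // ¬ v = x₀}) = Nat.card γ :=
    Nat.card_congr (Equiv.sumCompl (fun v : γ => v = x₀))
  rw [Nat.card_sum] at h1
  have h2 : Nat.card {v : γ // v = x₀} = 1 :=
    Nat.card_eq_one_iff_unique.2 ⟨⟨by rintro ⟨a, ha⟩ ⟨b, hb⟩; exact Subtype.ext (ha.trans hb.symm)⟩,
      ⟨⟨x₀, rfl⟩⟩⟩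
  rw [h2] at h1
  omega

lemma bip_connected_card_le {α β ε : Type*} [Finite α] [Finite β] [Finite ε]
    (f : ε → α) (g : ε → β) (hc : (bipGraph f g).Connected) :
    Nat.card (α ⊕ β) ≤ Nat.card ε + 1 := by
  classical
  obtain ⟨x₀⟩ := hc.nonempty
  set G := bipGraph f g with hG
  have key : ∀ v : α ⊕ β, v ≠ x₀ → ∃ e : ε,
      (v = Sum.inl (f e) ∧ G.dist x₀ (Sum.inr (g e)) < G.dist x₀ v) ∨
      (v = Sum.inr (g e) ∧ G.dist x₀ (Sum.inl (f e)) < G.dist x₀ v) := by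
    intro v hv
    have hr : G.Reachable x₀ v := hc.preconnected x₀ v
    obtain ⟨w, hw⟩ := hr.exists_walk_length_eq_dist
    have hpos : 0 < G.dist x₀ v := hc.pos_dist_of_ne (Ne.symm hv)
    have hlen : w.reverse.length = G.dist x₀ v := by
      rw [SimpleGraph.Walk.length_reverse]; exact hw
    cases hrw : w.reverse with
    | nil => exact absurd rfl hv
    | cons h w' =>
      rename_i u
      have hlt : G.dist x₀ u < G.dist x₀ v := by
        have h1 : G.dist u x₀ ≤ w'.length := SimpleGraph.dist_le w'
        have h2 : w'.length + 1 = G.dist x₀ v := by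
          rw [← hlen, hrw]; simp
        rw [SimpleGraph.dist_comm] at h1
        omega
      rcases h with ⟨e, ⟨h1, h2⟩ | ⟨h1, h2⟩⟩
      · exact ⟨e, Or.inl ⟨h1, h2 ▸ hlt⟩⟩
      · exact ⟨e, Or.inr ⟨h2, h1 ▸ hlt⟩⟩
  choose F hF using fun v : {v : α ⊕ β // v ≠ x₀} => key v.1 v.2
  have hFinj : Function.Injective F := by
    rintro ⟨v, hv⟩ ⟨v', hv'⟩ hFe
    have h1 := hF ⟨v, hv⟩
    have h2 := hF ⟨v', hv'⟩
    rw [hFe] at h1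
    apply Subtype.ext
    rcases h1 with ⟨ha, hb⟩ | ⟨ha, hb⟩ <;> rcases h2 with ⟨hc', hd⟩ | ⟨hc', hd⟩
    · exact ha.trans hc'.symm
    · exfalso; rw [← ha] at hd; rw [← hc'] at hb; omega
    · exfalso; rw [← ha] at hd; rw [← hc'] at hb; omega
    · exact ha.trans hc'.symm
  have hle : Nat.card {v : α ⊕ β // v ≠ x₀} ≤ Nat.card ε :=
    Nat.card_le_card_of_injective F hFinj
  have := card_compl_add_one x₀ (γ := α ⊕ β)
  omega

lemma isForestBip_of_isTreeBip {α β ε : Type*} [Finite α] [Finite β] [Finite ε]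
    {f : ε → α} {g : ε → β} (ht : isTreeBip f g) : isForestBip f g := by
  intro e₀ hreach
  have hwalkreach : ∀ {x y : α ⊕ β}, (bipGraph f g).Walk x y → (delBip f g e₀).Reachable x y := by
    intro x y w
    induction w with
    | nil => exact SimpleGraph.Reachable.refl _
    | cons h w ih =>
      rcases h with ⟨e, hc⟩
      by_cases he : e = e₀
      · subst he
        rcases hc with ⟨h1, h2⟩ | ⟨h1, h2⟩
        · subst h1; subst h2; exact hreach.trans ih
        · subst h1; subst h2; exact hreach.symm.trans ih
      · refine (SimpleGraph.Adj.reachable ?_).trans ih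
        exact ⟨⟨e, he⟩, hc⟩
  have hconn : (delBip f g e₀).Connected :=
    { preconnected := fun x y => hwalkreach ((ht.1.preconnected x y).some)
      nonempty := ⟨Sum.inl (f e₀)⟩ }
  have hb := bip_connected_card_le _ _ hconn
  have hcc := card_compl_add_one e₀
  have hcount := ht.2
  omega

end ForestLemmas
section Specialized

open SimpleGraph

variable {V E : Type*} (src trg : E → V)

lemma cmp_trg (e : E) :
    Quotient.mk (compSetoid src trg) (trg e) = Quotient.mk (compSetoid src trg) (src e) :=
  (Quotient.sound (Relation.EqvGen.rel _ _ ⟨e, rfl, rfl⟩)).symm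

lemma cmp_end {u : V} {e : E} (h : u = src e ∨ u = trg e) :
    Quotient.mk (compSetoid src trg) u = edgeComp src trg (Quotient.mk (sameEndsSetoid src trg) e) := by
  rcases h with rfl | rfl
  · rfl
  · exact cmp_trg src trg e

lemma ori_mem (P : OrientedEdgePartition src trg) (e : E) :
    ((P.ori e).1 = src e ∨ (P.ori e).1 = trg e) ∧ ((P.ori e).2 = src e ∨ (P.ori e).2 = trg e) := by
  rcases P.ori_spec e with h | h <;> rw [h] <;> simp

lemma vertexSetoid_reachable {P : OrientedEdgePartition src trg} {u v : V}
    (h : P.vertexSetoid u v) :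
    (bipGraph (edgeComp src trg) (edgeBlock P)).Reachable
      (Sum.inl (Quotient.mk (compSetoid src trg) u))
      (Sum.inl (Quotient.mk (compSetoid src trg) v)) := by
  have h' : Relation.EqvGen (fun u v => ∃ e e', P.rel e e' ∧
      ((u = (P.ori e).1 ∧ v = (P.ori e').1) ∨ (u = (P.ori e).2 ∧ v = (P.ori e').2))) u v := h
  clear h
  induction h' with
  | rel a b hab =>
    obtain ⟨e, e', hrel, hcase⟩ := hab
    have ha : Quotient.mk (compSetoid src trg) a
        = edgeComp src trg (Quotient.mk (sameEndsSetoid src trg) e) := by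
      rcases hcase with ⟨rfl, _⟩ | ⟨rfl, _⟩
      · exact cmp_end src trg (ori_mem src trg P e).1
      · exact cmp_end src trg (ori_mem src trg P e).2
    have hb : Quotient.mk (compSetoid src trg) b
        = edgeComp src trg (Quotient.mk (sameEndsSetoid src trg) e') := by
      rcases hcase with ⟨_, rfl⟩ | ⟨_, rfl⟩
      · exact cmp_end src trg (ori_mem src trg P e').1
      · exact cmp_end src trg (ori_mem src trg P e').2
    rw [ha, hb]
    have hblock : edgeBlock P (Quotient.mk (sameEndsSetoid src trg) e)
        = edgeBlock P (Quotient.mk (sameEndsSetoid src trg) e') := Quotient.sound hrel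
    have adj1 : (bipGraph (edgeComp src trg) (edgeBlock P)).Adj
        (Sum.inl (edgeComp src trg (Quotient.mk (sameEndsSetoid src trg) e)))
        (Sum.inr (edgeBlock P (Quotient.mk (sameEndsSetoid src trg) e))) :=
      ⟨Quotient.mk (sameEndsSetoid src trg) e, Or.inl ⟨rfl, rfl⟩⟩
    have adj2 : (bipGraph (edgeComp src trg) (edgeBlock P)).Adj
        (Sum.inl (edgeComp src trg (Quotient.mk (sameEndsSetoid src trg) e')))
        (Sum.inr (edgeBlock P (Quotient.mk (sameEndsSetoid src trg) e))) := by
      rw [hblock]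
      exact ⟨Quotient.mk (sameEndsSetoid src trg) e', Or.inl ⟨rfl, rfl⟩⟩
    exact adj1.reachable.trans adj2.reachable.symm
  | refl a => exact SimpleGraph.Reachable.refl _
  | symm a b _ ih => exact ih.symm
  | trans a b c _ _ ih1 ih2 => exact ih1.trans ih2

/-- Split off the elementary class of `e₁` from its block. -/
def OrientedEdgePartition.split (P : OrientedEdgePartition src trg) (e₁ : E) :
    OrientedEdgePartition src trg where
  rel := splitSetoid P.rel (fun x => sameEnds src trg x e₁)
  sameEnds_le := fun e e' h =>
    ⟨P.sameEnds_le e e' h, ⟨fun h1 => h.symm.trans h1, fun h1 => h.trans h1⟩⟩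
  ori := P.ori
  ori_spec := P.ori_spec
  ori_const := P.ori_const

lemma split_adj_z {P : OrientedEdgePartition src trg} {e₁ : E} {x : Quotient (compSetoid src trg) ⊕ Quotient (P.split src trg e₁).rel}
    (h : (bipGraph (edgeComp src trg) (edgeBlock (P.split src trg e₁))).Adj x
      (Sum.inr (edgeBlock (P.split src trg e₁) (Quotient.mk (sameEndsSetoid src trg) e₁)))) :
    x = Sum.inl (edgeComp src trg (Quotient.mk (sameEndsSetoid src trg) e₁)) := by
  obtain ⟨eb, hc | hc⟩ := h
  · obtain ⟨e, rfl⟩ := Quotient.exists_rep eb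
    obtain ⟨h1, h2⟩ := hc
    have hblock : (P.split src trg e₁).rel e₁ e := Quotient.exact (Sum.inr.inj h2)
    have hK : sameEnds src trg e e₁ := hblock.2.1 rfl
    have hq : Quotient.mk (sameEndsSetoid src trg) e = Quotient.mk (sameEndsSetoid src trg) e₁ :=
      Quotient.sound hK
    rw [h1, hq]
  · exact absurd hc.1 (by simp)

lemma split_walk_avoid {P : OrientedEdgePartition src trg} {e₁ : E} :
    ∀ (n : ℕ) {x y : Quotient (compSetoid src trg) ⊕ Quotient (P.split src trg e₁).rel}
      (w : (bipGraph (edgeComp src trg) (edgeBlock (P.split src trg e₁))).Walk x y),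
      w.length ≤ n →
      x ≠ Sum.inr (edgeBlock (P.split src trg e₁) (Quotient.mk (sameEndsSetoid src trg) e₁)) →
      y ≠ Sum.inr (edgeBlock (P.split src trg e₁) (Quotient.mk (sameEndsSetoid src trg) e₁)) →
      (delBip (edgeComp src trg) (edgeBlock (P.split src trg e₁))
        (Quotient.mk (sameEndsSetoid src trg) e₁)).Reachable x y := by
  intro n
  induction n with
  | zero =>
    intro x y w hw hx hy
    cases w with
    | nil => exact SimpleGraph.Reachable.refl _
    | cons h w => simp at hw
  | succ n ih =>
    intro x y w hw hx hy
    cases w with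
    | nil => exact SimpleGraph.Reachable.refl _
    | cons h w' =>
      rename_i u
      by_cases hu : u = Sum.inr (edgeBlock (P.split src trg e₁)
          (Quotient.mk (sameEndsSetoid src trg) e₁))
      · subst hu
        have hx1 : x = Sum.inl (edgeComp src trg (Quotient.mk (sameEndsSetoid src trg) e₁)) :=
          split_adj_z src trg h
        cases w' with
        | nil => exact absurd rfl hy
        | cons h2 w2 =>
          rename_i u2
          have hu2 : u2 = Sum.inl (edgeComp src trg (Quotient.mk (sameEndsSetoid src trg) e₁)) :=
            split_adj_z src trg h2.symm
          have hlen : w2.length ≤ n := by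
            simp only [SimpleGraph.Walk.length_cons] at hw; omega
          have hr := ih w2 hlen (by rw [hu2]; simp) hy
          rw [hx1, ← hu2]
          exact hr
      · have hadj : (delBip (edgeComp src trg) (edgeBlock (P.split src trg e₁))
            (Quotient.mk (sameEndsSetoid src trg) e₁)).Adj x u := by
          obtain ⟨eb, hc⟩ := h
          have hebne : eb ≠ Quotient.mk (sameEndsSetoid src trg) e₁ := by
            rintro rfl
            rcases hc with ⟨h1, h2⟩ | ⟨h1, h2⟩
            · exact hu h2
            · exact hx h2
          exact ⟨⟨eb, hebne⟩, hc⟩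
        have hlen : w'.length ≤ n := by
          simp only [SimpleGraph.Walk.length_cons] at hw; omega
        exact hadj.reachable.trans (ih w' hlen hu hy)

/-- The natural map from blocks of the split partition to blocks of `P`. -/
def qmapB (P : OrientedEdgePartition src trg) (e₁ : E) :
    Quotient (P.split src trg e₁).rel → Quotient P.rel :=
  Quotient.map id (fun _ _ h => h.1)

lemma qmapB_block (P : OrientedEdgePartition src trg) (e₁ : E)
    (eb : Quotient (sameEndsSetoid src trg)) :
    qmapB src trg P e₁ (edgeBlock (P.split src trg e₁) eb) = edgeBlock P eb := by
  obtain ⟨e, rfl⟩ := Quotient.exists_rep eb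
  rfl

lemma isForestBip_split {P : OrientedEdgePartition src trg} (e₁ : E)
    (hf : isForestBip (edgeComp src trg) (edgeBlock P)) :
    isForestBip (edgeComp src trg) (edgeBlock (P.split src trg e₁)) := by
  intro eb₀ hreach
  apply hf eb₀
  have hmap := reachable_map_black (qmapB src trg P e₁)
    (fun eb : {eb // eb ≠ eb₀} => qmapB_block src trg P e₁ eb.1) hreach
  simpa [qmapB_block] using hmap

lemma split_nonreachable {P : OrientedEdgePartition src trg} {e₁ e₂ : E}
    (hforest : isForestBip (edgeComp src trg) (edgeBlock P))
    (h12 : P.rel e₁ e₂) (hne : ¬ sameEnds src trg e₁ e₂)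
    (h : (bipGraph (edgeComp src trg) (edgeBlock (P.split src trg e₁))).Reachable
      (Sum.inl (edgeComp src trg (Quotient.mk (sameEndsSetoid src trg) e₁)))
      (Sum.inl (edgeComp src trg (Quotient.mk (sameEndsSetoid src trg) e₂)))) : False := by
  obtain ⟨w⟩ := h
  have hdel := split_walk_avoid src trg w.length w le_rfl (by simp) (by simp)
  have hmap := reachable_map_black (qmapB src trg P e₁)
    (fun eb : {eb // eb ≠ Quotient.mk (sameEndsSetoid src trg) e₁} =>
      qmapB_block src trg P e₁ eb.1) hdel
  simp only [Sum.map_inl, id_eq] at hmap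
  have hne' : (Quotient.mk (sameEndsSetoid src trg) e₂ : Quotient (sameEndsSetoid src trg))
      ≠ Quotient.mk (sameEndsSetoid src trg) e₁ :=
    fun hq => hne ((Quotient.exact hq).symm)
  have hadj : (delBip (edgeComp src trg) (edgeBlock P)
      (Quotient.mk (sameEndsSetoid src trg) e₁)).Adj
      (Sum.inl (edgeComp src trg (Quotient.mk (sameEndsSetoid src trg) e₂)))
      (Sum.inr (edgeBlock P (Quotient.mk (sameEndsSetoid src trg) e₁))) := by
    refine ⟨⟨Quotient.mk (sameEndsSetoid src trg) e₂, hne'⟩, Or.inl ⟨rfl, ?_⟩⟩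
    exact congrArg Sum.inr (Quotient.sound h12)
  exact hforest (Quotient.mk (sameEndsSetoid src trg) e₁) (hmap.trans hadj.reachable)

end Specialized
section MainProof

open SimpleGraph

variable {V E : Type*} [Fintype V] [Fintype E] (src trg : E → V)

lemma main_base (P : OrientedEdgePartition src trg)
    (hP : ∀ e e', P.rel e e' → sameEnds src trg e e') :
    ((Nat.card (Quotient P.vertexSetoid) : ℤ) =
      (Fintype.card V : ℤ) - 2 * ((Nat.card (Quotient (sameEndsSetoid src trg)) : ℤ)
        - (Nat.card (Quotient P.rel) : ℤ)))
    ∧ (∀ e : E, src e ≠ trg e → ¬ P.vertexSetoid (src e) (trg e)) := by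
  have hvs : ∀ u v : V, P.vertexSetoid u v → u = v := by
    intro u v h
    have h' : Relation.EqvGen (fun u v => ∃ e e', P.rel e e' ∧
        ((u = (P.ori e).1 ∧ v = (P.ori e').1) ∨ (u = (P.ori e).2 ∧ v = (P.ori e').2))) u v := h
    refine eqvGen_le_setoid (s := ⟨Eq, eq_equivalence⟩) ?_ u v h'
    rintro x y ⟨e, e', hrel, hc⟩
    have horieq : P.ori e = P.ori e' := P.ori_const e e' (hP _ _ hrel)
    show x = y
    rcases hc with ⟨rfl, rfl⟩ | ⟨rfl, rfl⟩ <;> rw [horieq]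
  have h1 : Nat.card (Quotient P.vertexSetoid) = Fintype.card V := by
    rw [card_quotient_of_eq P.vertexSetoid hvs, Nat.card_eq_fintype_card]
  have h2 : P.rel = sameEndsSetoid src trg :=
    Setoid.ext fun a b => ⟨hP a b, P.sameEnds_le a b⟩
  constructor
  · rw [h1, h2]; ring
  · intro e he hrel
    exact he (hvs _ _ hrel)

lemma main_aux : ∀ (n : ℕ) (P : OrientedEdgePartition src trg),
    (∀ e e', src e = trg e → P.rel e e' → sameEnds src trg e e') →
    isForestBip (edgeComp src trg) (edgeBlock P) →
    Set.ncard {p : E × E | P.rel p.1 p.2 ∧ ¬ sameEnds src trg p.1 p.2} ≤ n →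
    ((Nat.card (Quotient P.vertexSetoid) : ℤ) =
      (Fintype.card V : ℤ) - 2 * ((Nat.card (Quotient (sameEndsSetoid src trg)) : ℤ)
        - (Nat.card (Quotient P.rel) : ℤ)))
    ∧ (∀ e : E, src e ≠ trg e → ¬ P.vertexSetoid (src e) (trg e)) := by
  intro n
  induction n with
  | zero =>
    intro P hloop hforest hcard
    by_cases hex : ∃ p : E × E, P.rel p.1 p.2 ∧ ¬ sameEnds src trg p.1 p.2
    · exfalso
      have hpos : 0 < Set.ncard {p : E × E | P.rel p.1 p.2 ∧ ¬ sameEnds src trg p.1 p.2} :=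
        (Set.ncard_pos (Set.toFinite _)).2 hex
      omega
    · push_neg at hex
      exact main_base src trg P (fun e e' h => hex (e, e') h)
  | succ n ih =>
    intro P hloop hforest hcard
    by_cases hex : ∃ p : E × E, P.rel p.1 p.2 ∧ ¬ sameEnds src trg p.1 p.2
    swap
    · push_neg at hex
      exact main_base src trg P (fun e e' h => hex (e, e') h)
    obtain ⟨⟨e₁, e₂⟩, h12, hne⟩ := hex
    set P' := P.split src trg e₁ with hP'def
    have hKe₂ : ¬ sameEnds src trg e₂ e₁ := fun h => hne h.symm
    -- measure decreases
    have hsub : {p : E × E | P'.rel p.1 p.2 ∧ ¬ sameEnds src trg p.1 p.2} ⊂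
        {p : E × E | P.rel p.1 p.2 ∧ ¬ sameEnds src trg p.1 p.2} := by
      constructor
      · rintro ⟨a, b⟩ ⟨h1, h2⟩
        exact ⟨h1.1, h2⟩
      · intro hsup
        have hmem := hsup (show (e₁, e₂) ∈ {p : E × E | P.rel p.1 p.2 ∧
            ¬ sameEnds src trg p.1 p.2} from ⟨h12, hne⟩)
        obtain ⟨⟨-, hiff⟩, -⟩ := hmem
        exact hKe₂ (hiff.1 rfl)
    have hm' : Set.ncard {p : E × E | P'.rel p.1 p.2 ∧ ¬ sameEnds src trg p.1 p.2} ≤ n := by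
      have hlt := Set.ncard_lt_ncard hsub (Set.toFinite _)
      omega
    have hloop' : ∀ e e', src e = trg e → P'.rel e e' → sameEnds src trg e e' :=
      fun e e' hst h => hloop e e' hst h.1
    have hforest' := isForestBip_split src trg e₁ hforest
    obtain ⟨IH1, IH2⟩ := ih P' hloop' hforest' hm'
    -- reachability facts
    have hnr : ¬ (bipGraph (edgeComp src trg) (edgeBlock P')).Reachable
        (Sum.inl (edgeComp src trg (Quotient.mk (sameEndsSetoid src trg) e₁)))
        (Sum.inl (edgeComp src trg (Quotient.mk (sameEndsSetoid src trg) e₂))) :=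
      fun h => split_nonreachable src trg hforest h12 hne h
    have hRc : ∀ u v : V, (u = src e₁ ∨ u = trg e₁) → (v = src e₂ ∨ v = trg e₂) →
        ¬ (bipGraph (edgeComp src trg) (edgeBlock P')).Reachable
          (Sum.inl (Quotient.mk (compSetoid src trg) u))
          (Sum.inl (Quotient.mk (compSetoid src trg) v)) := by
      intro u v hu hv h
      rw [cmp_end src trg hu, cmp_end src trg hv] at h
      exact hnr h
    have hnr' : ∀ u v : V, (u = src e₁ ∨ u = trg e₁) → (v = src e₂ ∨ v = trg e₂) →
        ¬ P'.vertexSetoid u v :=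
      fun u v hu hv h => hRc u v hu hv (vertexSetoid_reachable src trg h)
    have hm₁ := ori_mem src trg P e₁
    have hm₂ := ori_mem src trg P e₂
    have hnta : ¬ P'.vertexSetoid (P.ori e₁).1 (P.ori e₂).1 := hnr' _ _ hm₁.1 hm₂.1
    have hntb : ¬ P'.vertexSetoid (P.ori e₁).2 (P.ori e₂).2 := hnr' _ _ hm₁.2 hm₂.2
    have hntab : ¬ P'.vertexSetoid (P.ori e₁).1 (P.ori e₂).2 := hnr' _ _ hm₁.1 hm₂.2
    have hntba : ¬ P'.vertexSetoid (P.ori e₁).2 (P.ori e₂).1 := hnr' _ _ hm₁.2 hm₂.1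
    -- non-loop facts and the endpoint-separation property
    have hst₁ : src e₁ ≠ trg e₁ := fun h => hne (hloop e₁ e₂ h h12)
    have hst₂ : src e₂ ≠ trg e₂ := fun h =>
      hne ((hloop e₂ e₁ h (P.rel.iseqv.symm h12)).symm)
    have hS₁ : ¬ P'.vertexSetoid (P.ori e₁).1 (P.ori e₁).2 := by
      intro h
      apply IH2 e₁ hst₁
      rcases P.ori_spec e₁ with ho | ho <;> rw [ho] at h <;> simp only [] at h
      · exact h
      · exact P'.vertexSetoid.iseqv.symm h
    have hS₂ : ¬ P'.vertexSetoid (P.ori e₂).1 (P.ori e₂).2 := by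
      intro h
      apply IH2 e₂ hst₂
      rcases P.ori_spec e₂ with ho | ho <;> rw [ho] at h <;> simp only [] at h
      · exact h
      · exact P'.vertexSetoid.iseqv.symm h
    -- the vertex setoid of P as a double pair-addition
    have hlift0 : ∀ u v : V, P'.vertexSetoid u v →
        (addPairSetoid (addPairSetoid P'.vertexSetoid (P.ori e₁).1 (P.ori e₂).1)
          (P.ori e₁).2 (P.ori e₂).2) u v :=
      fun u v h => addPairSetoid_le_base _ _ _ _ _ (addPairSetoid_le_base _ _ _ _ _ h)
    have hgen0 : ∀ u v : V, P'.vertexSetoid u v → P.vertexSetoid u v := by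
      intro u v h
      have h' : Relation.EqvGen (fun u v => ∃ e e', P'.rel e e' ∧
          ((u = (P'.ori e).1 ∧ v = (P'.ori e').1) ∨ (u = (P'.ori e).2 ∧ v = (P'.ori e').2))) u v := h
      refine eqvGen_le_setoid ?_ u v h'
      rintro x y ⟨e, e', hrel, hc⟩
      exact Relation.EqvGen.rel x y ⟨e, e', hrel.1, hc⟩
    have hpa : P.vertexSetoid (P.ori e₁).1 (P.ori e₂).1 :=
      Relation.EqvGen.rel _ _ ⟨e₁, e₂, h12, Or.inl ⟨rfl, rfl⟩⟩
    have hpb : P.vertexSetoid (P.ori e₁).2 (P.ori e₂).2 :=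
      Relation.EqvGen.rel _ _ ⟨e₁, e₂, h12, Or.inr ⟨rfl, rfl⟩⟩
    have ht2le : ∀ u v : V,
        (addPairSetoid (addPairSetoid P'.vertexSetoid (P.ori e₁).1 (P.ori e₂).1)
          (P.ori e₁).2 (P.ori e₂).2) u v → P.vertexSetoid u v := by
      intro u v h
      have h' : Relation.EqvGen (fun a b =>
          (addPairSetoid P'.vertexSetoid (P.ori e₁).1 (P.ori e₂).1) a b ∨
          (a = (P.ori e₁).2 ∧ b = (P.ori e₂).2)) u v := h
      refine eqvGen_le_setoid ?_ u v h'
      rintro x y (hxy | ⟨rfl, rfl⟩)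
      · have h'' : Relation.EqvGen (fun a b => P'.vertexSetoid a b ∨
            (a = (P.ori e₁).1 ∧ b = (P.ori e₂).1)) x y := hxy
        refine eqvGen_le_setoid ?_ x y h''
        rintro x' y' (hxy' | ⟨rfl, rfl⟩)
        · exact hgen0 _ _ hxy'
        · exact hpa
      · exact hpb
    have ht2ge : ∀ u v : V, P.vertexSetoid u v →
        (addPairSetoid (addPairSetoid P'.vertexSetoid (P.ori e₁).1 (P.ori e₂).1)
          (P.ori e₁).2 (P.ori e₂).2) u v := by
      intro u v h
      have h' : Relation.EqvGen (fun u v => ∃ e e', P.rel e e' ∧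
          ((u = (P.ori e).1 ∧ v = (P.ori e').1) ∨ (u = (P.ori e).2 ∧ v = (P.ori e').2))) u v := h
      refine eqvGen_le_setoid ?_ u v h'
      rintro x y ⟨e, e', hrel, hc⟩
      have hpair1 : (addPairSetoid (addPairSetoid P'.vertexSetoid (P.ori e₁).1 (P.ori e₂).1)
          (P.ori e₁).2 (P.ori e₂).2) (P.ori e₁).1 (P.ori e₂).1 :=
        addPairSetoid_le_base _ _ _ _ _ (addPairSetoid_pair _ _ _)
      have hpair2 : (addPairSetoid (addPairSetoid P'.vertexSetoid (P.ori e₁).1 (P.ori e₂).1)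
          (P.ori e₁).2 (P.ori e₂).2) (P.ori e₁).2 (P.ori e₂).2 :=
        addPairSetoid_pair _ _ _
      by_cases he : sameEnds src trg e e₁ <;> by_cases he' : sameEnds src trg e' e₁
      · exact hlift0 _ _ (Relation.EqvGen.rel x y ⟨e, e', ⟨hrel, iff_of_true he he'⟩, hc⟩)
      · have hoe : P.ori e = P.ori e₁ := P.ori_const e e₁ he
        have hre' : P.rel e' e₂ :=
          P.rel.iseqv.trans (P.rel.iseqv.symm hrel)
            (P.rel.iseqv.trans (P.sameEnds_le e e₁ he) h12)
        have hrel' : P'.rel e' e₂ := ⟨hre', iff_of_false he' hKe₂⟩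
        rcases hc with ⟨rfl, rfl⟩ | ⟨rfl, rfl⟩
        · have hv : P'.vertexSetoid (P.ori e').1 (P.ori e₂).1 :=
            Relation.EqvGen.rel _ _ ⟨e', e₂, hrel', Or.inl ⟨rfl, rfl⟩⟩
          rw [hoe]
          exact (addPairSetoid _ _ _).iseqv.trans hpair1
            ((addPairSetoid _ _ _).iseqv.symm (hlift0 _ _ hv))
        · have hv : P'.vertexSetoid (P.ori e').2 (P.ori e₂).2 :=
            Relation.EqvGen.rel _ _ ⟨e', e₂, hrel', Or.inr ⟨rfl, rfl⟩⟩
          rw [hoe]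
          exact (addPairSetoid _ _ _).iseqv.trans hpair2
            ((addPairSetoid _ _ _).iseqv.symm (hlift0 _ _ hv))
      · have hoe : P.ori e' = P.ori e₁ := P.ori_const e' e₁ he'
        have hre : P.rel e e₂ :=
          P.rel.iseqv.trans hrel
            (P.rel.iseqv.trans (P.sameEnds_le e' e₁ he') h12)
        have hrel' : P'.rel e e₂ := ⟨hre, iff_of_false he hKe₂⟩
        rcases hc with ⟨rfl, rfl⟩ | ⟨rfl, rfl⟩
        · have hv : P'.vertexSetoid (P.ori e).1 (P.ori e₂).1 :=
            Relation.EqvGen.rel _ _ ⟨e, e₂, hrel', Or.inl ⟨rfl, rfl⟩⟩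
          rw [hoe]
          exact (addPairSetoid _ _ _).iseqv.trans (hlift0 _ _ hv)
            ((addPairSetoid _ _ _).iseqv.symm hpair1)
        · have hv : P'.vertexSetoid (P.ori e).2 (P.ori e₂).2 :=
            Relation.EqvGen.rel _ _ ⟨e, e₂, hrel', Or.inr ⟨rfl, rfl⟩⟩
          rw [hoe]
          exact (addPairSetoid _ _ _).iseqv.trans (hlift0 _ _ hv)
            ((addPairSetoid _ _ _).iseqv.symm hpair2)
      · exact hlift0 _ _ (Relation.EqvGen.rel x y ⟨e, e', ⟨hrel, iff_of_false he he'⟩, hc⟩)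
    have hvs_eq : P.vertexSetoid =
        addPairSetoid (addPairSetoid P'.vertexSetoid (P.ori e₁).1 (P.ori e₂).1)
          (P.ori e₁).2 (P.ori e₂).2 :=
      Setoid.ext fun u v => ⟨ht2ge u v, ht2le u v⟩
    -- counting
    have hcard1 : Nat.card (Quotient P'.vertexSetoid) =
        Nat.card (Quotient (addPairSetoid P'.vertexSetoid (P.ori e₁).1 (P.ori e₂).1)) + 1 :=
      card_addPairSetoid _ _ _ hnta
    have hnt1 : ¬ (addPairSetoid P'.vertexSetoid (P.ori e₁).1 (P.ori e₂).1)
        (P.ori e₁).2 (P.ori e₂).2 := by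
      intro h
      rcases (addPairSetoid_iff P'.vertexSetoid (P.ori e₁).1 (P.ori e₂).1 _ _).1 h with
        h0 | ⟨h0, h0'⟩ | ⟨h0, h0'⟩
      · exact hntb h0
      · exact hS₁ (P'.vertexSetoid.iseqv.symm h0)
      · exact hntba h0
    have hcard2 : Nat.card (Quotient (addPairSetoid P'.vertexSetoid (P.ori e₁).1 (P.ori e₂).1)) =
        Nat.card (Quotient (addPairSetoid
          (addPairSetoid P'.vertexSetoid (P.ori e₁).1 (P.ori e₂).1)
          (P.ori e₁).2 (P.ori e₂).2)) + 1 :=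
      card_addPairSetoid _ _ _ hnt1
    have hcards : Nat.card (Quotient P'.rel) = Nat.card (Quotient P.rel) + 1 :=
      card_splitSetoid P.rel (fun x => sameEnds src trg x e₁) e₁ e₂ h12 rfl hKe₂
        (fun x hx => P.sameEnds_le x e₁ hx)
    constructor
    · rw [hvs_eq]
      rw [hcards] at IH1
      push_cast at IH1 ⊢
      omega
    · intro f hf hrel
      rw [hvs_eq] at hrel
      have hreachf : ∀ u v : V,
          (P'.vertexSetoid u (src f) ∨ P'.vertexSetoid u (trg f)) →
          (P'.vertexSetoid v (src f) ∨ P'.vertexSetoid v (trg f)) →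
          (bipGraph (edgeComp src trg) (edgeBlock P')).Reachable
            (Sum.inl (Quotient.mk (compSetoid src trg) u))
            (Sum.inl (Quotient.mk (compSetoid src trg) v)) := by
        intro u v hu hv
        have hmk : ∀ w : V, (P'.vertexSetoid w (src f) ∨ P'.vertexSetoid w (trg f)) →
            (bipGraph (edgeComp src trg) (edgeBlock P')).Reachable
              (Sum.inl (Quotient.mk (compSetoid src trg) w))
              (Sum.inl (Quotient.mk (compSetoid src trg) (src f))) := by
          intro w hw
          rcases hw with hw | hw
          · exact vertexSetoid_reachable src trg hw
          · refine (vertexSetoid_reachable src trg hw).trans ?_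
            rw [cmp_trg src trg f]
        exact (hmk u hu).trans (hmk v hv).symm
      rcases (addPairSetoid_iff (addPairSetoid P'.vertexSetoid (P.ori e₁).1 (P.ori e₂).1)
          (P.ori e₁).2 (P.ori e₂).2 _ _).1 hrel with hA | ⟨hB1, hB2⟩ | ⟨hC1, hC2⟩
      · rcases (addPairSetoid_iff P'.vertexSetoid (P.ori e₁).1 (P.ori e₂).1 _ _).1 hA with
          h0 | ⟨h1, h2⟩ | ⟨h1, h2⟩
        · exact IH2 f hf h0
        · exact hRc _ _ hm₁.1 hm₂.1 (hreachf _ _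
            (Or.inl (P'.vertexSetoid.iseqv.symm h1)) (Or.inr h2))
        · exact hRc _ _ hm₁.1 hm₂.1 (hreachf _ _
            (Or.inr h2) (Or.inl (P'.vertexSetoid.iseqv.symm h1)))
      · have hxb₁ : P'.vertexSetoid (src f) (P.ori e₁).2 := by
          rcases (addPairSetoid_iff P'.vertexSetoid (P.ori e₁).1 (P.ori e₂).1 _ _).1 hB1 with
            h0 | ⟨h1, h2⟩ | ⟨h1, h2⟩
          · exact h0
          · exact absurd (P'.vertexSetoid.iseqv.symm h2) hntba
          · exact absurd h2 hS₁
        have hb₂y : P'.vertexSetoid (P.ori e₂).2 (trg f) := by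
          rcases (addPairSetoid_iff P'.vertexSetoid (P.ori e₁).1 (P.ori e₂).1 _ _).1 hB2 with
            h0 | ⟨h1, h2⟩ | ⟨h1, h2⟩
          · exact h0
          · exact absurd (P'.vertexSetoid.iseqv.symm h1) hntab
          · exact absurd (P'.vertexSetoid.iseqv.symm h1) hS₂
        exact hRc _ _ hm₁.2 hm₂.2 (hreachf _ _
          (Or.inl (P'.vertexSetoid.iseqv.symm hxb₁)) (Or.inr hb₂y))
      · have hxb₂ : P'.vertexSetoid (src f) (P.ori e₂).2 := by
          rcases (addPairSetoid_iff P'.vertexSetoid (P.ori e₁).1 (P.ori e₂).1 _ _).1 hC1 with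
            h0 | ⟨h1, h2⟩ | ⟨h1, h2⟩
          · exact h0
          · exact absurd h2 hS₂
          · exact absurd h2 hntab
        have hb₁y : P'.vertexSetoid (P.ori e₁).2 (trg f) := by
          rcases (addPairSetoid_iff P'.vertexSetoid (P.ori e₁).1 (P.ori e₂).1 _ _).1 hC2 with
            h0 | ⟨h1, h2⟩ | ⟨h1, h2⟩
          · exact h0
          · exact absurd (P'.vertexSetoid.iseqv.symm h1) hS₁
          · exact absurd h1 hntba
        exact hRc _ _ hm₁.2 hm₂.2 (hreachf _ _
          (Or.inr hb₁y) (Or.inl (P'.vertexSetoid.iseqv.symm hxb₂)))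

end MainProof

/-- Let `(τ,∼)` be an oriented partition of the edges of a labelled oriented
graph `G` such that every loop of the elementarization `Ḡ` forms a singleton
block of `τ`.  If the bipartite graph `G(τ)` — white vertices the connected
components of `G`, black vertices the blocks of `τ`, one edge for each edge
of `Ḡ` — is a tree, then the induced vertex partition satisfies
`#(τ∼) = |V| − 2(c − 1)`, where `c` is the number of connected components
of `G`. -/
theorem vertexSetoid_card_of_tree {V E : Type*} [Fintype V] [Fintype E]
    (src trg : E → V) (P : OrientedEdgePartition src trg)
    (hloop : ∀ e e', src e = trg e → P.rel e e' → sameEnds src trg e e')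
    (htree : isTreeBip (edgeComp src trg) (edgeBlock P)) :
    (Nat.card (Quotient P.vertexSetoid) : ℤ) =
      (Fintype.card V : ℤ) -
        2 * ((Nat.card (Quotient (compSetoid src trg)) : ℤ) - 1) := by
  have hforest : isForestBip (edgeComp src trg) (edgeBlock P) :=
    isForestBip_of_isTreeBip htree
  obtain ⟨h1, -⟩ := main_aux src trg
    (Set.ncard {p : E × E | P.rel p.1 p.2 ∧ ¬ sameEnds src trg p.1 p.2})
    P hloop hforest le_rfl
  have hcount := htree.2
  rw [Nat.card_sum] at hcount
  rw [h1]
  omega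
end

section
/- Let G be a labelled oriented graph with elementarization Ḡ and let (τ,∼) be an oriented partition of the edges such that every loop of Ḡ is a singleton block of τ, and suppose the bipartite graph G(τ) is connected. Then #(τ∼) ≤ |V| − 2(c − 1), where c is the number of connected components of G, with equality if and only if G(τ) is a tree. -/
open Relation

namespace VvAux

variable {α : Type*}

lemma eqvGen_sub_eq {r : α → α → Prop} (h : ∀ x y, r x y → x = y) :
    ∀ x y, EqvGen r x y → x = y := by
  intro x y hxy
  induction hxy with
  | rel a b h' => exact h _ _ h'
  | refl => rfl
  | symm a b _ ih => exact ih.symm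
  | trans a b c _ _ ih1 ih2 => exact ih1.trans ih2

/-- add one identification pair to a relation -/
def pairRel (r : α → α → Prop) (a b : α) : α → α → Prop :=
  fun x y => r x y ∨ (x = a ∧ y = b)

lemma eqvGen_pairRel_iff {r : α → α → Prop} {a b : α} (hab : ¬ EqvGen r a b) (x y : α) :
    EqvGen (pairRel r a b) x y ↔
      (EqvGen r x y ∨ (EqvGen r x a ∧ EqvGen r b y) ∨ (EqvGen r x b ∧ EqvGen r a y)) := by
  constructor
  · intro h
    induction h with
    | rel u v h' =>
      rcases h' with h' | ⟨rfl, rfl⟩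
      · exact Or.inl (EqvGen.rel _ _ h')
      · exact Or.inr (Or.inl ⟨EqvGen.refl _, EqvGen.refl _⟩)
    | refl u => exact Or.inl (EqvGen.refl _)
    | symm u v _ ih =>
      rcases ih with h | ⟨h1, h2⟩ | ⟨h1, h2⟩
      · exact Or.inl (EqvGen.symm _ _ h)
      · exact Or.inr (Or.inr ⟨EqvGen.symm _ _ h2, EqvGen.symm _ _ h1⟩)
      · exact Or.inr (Or.inl ⟨EqvGen.symm _ _ h2, EqvGen.symm _ _ h1⟩)
    | trans u v w _ _ ih1 ih2 =>
      rcases ih1 with h | ⟨h1, h2⟩ | ⟨h1, h2⟩ <;>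
        rcases ih2 with h' | ⟨h1', h2'⟩ | ⟨h1', h2'⟩
      · exact Or.inl (EqvGen.trans _ _ _ h h')
      · exact Or.inr (Or.inl ⟨EqvGen.trans _ _ _ h h1', h2'⟩)
      · exact Or.inr (Or.inr ⟨EqvGen.trans _ _ _ h h1', h2'⟩)
      · exact Or.inr (Or.inl ⟨h1, EqvGen.trans _ _ _ h2 h'⟩)
      · exact absurd (EqvGen.symm _ _ (EqvGen.trans _ _ _ h2 h1')) hab
      · exact Or.inl (EqvGen.trans _ _ _ h1 h2')
      · exact Or.inr (Or.inr ⟨h1, EqvGen.trans _ _ _ h2 h'⟩)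
      · exact Or.inl (EqvGen.trans _ _ _ h1 h2')
      · exact absurd (EqvGen.trans _ _ _ h2 h1') hab
  · intro h
    have hpair : EqvGen (pairRel r a b) a b := EqvGen.rel _ _ (Or.inr ⟨rfl, rfl⟩)
    have mono' : ∀ u v, EqvGen r u v → EqvGen (pairRel r a b) u v :=
      fun u v h' => EqvGen.mono (fun _ _ hh => Or.inl hh) _ _ h'
    rcases h with h | ⟨h1, h2⟩ | ⟨h1, h2⟩
    · exact mono' _ _ h
    · exact EqvGen.trans _ _ _ (EqvGen.trans _ _ _ (mono' _ _ h1) hpair) (mono' _ _ h2)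
    · exact EqvGen.trans _ _ _ (EqvGen.trans _ _ _ (mono' _ _ h1) (EqvGen.symm _ _ hpair))
        (mono' _ _ h2)

lemma eqvGen_pairRel_redundant {r : α → α → Prop} {a b : α} (h : EqvGen r a b) (x y : α) :
    EqvGen (pairRel r a b) x y ↔ EqvGen r x y := by
  constructor
  · intro h'
    induction h' with
    | rel u v h'' =>
      rcases h'' with h'' | ⟨rfl, rfl⟩
      · exact EqvGen.rel _ _ h''
      · exact h
    | refl u => exact EqvGen.refl _
    | symm u v _ ih => exact EqvGen.symm _ _ ih
    | trans u v w _ _ ih1 ih2 => exact EqvGen.trans _ _ _ ih1 ih2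
  · exact fun h' => EqvGen.mono (fun _ _ hh => Or.inl hh) _ _ h'

lemma mergeCard [Finite α] (r : α → α → Prop) {a b : α} (hab : ¬ EqvGen r a b) :
    Nat.card (Quotient (EqvGen.setoid (pairRel r a b))) + 1
      = Nat.card (Quotient (EqvGen.setoid r)) := by
  classical
  have char := eqvGen_pairRel_iff hab
  let u : Quotient (EqvGen.setoid r) → Quotient (EqvGen.setoid (pairRel r a b)) ⊕ PUnit.{1} :=
    Quotient.lift
      (fun x => if EqvGen r x b then Sum.inr PUnit.unit
        else Sum.inl (Quotient.mk (EqvGen.setoid (pairRel r a b)) x))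
      (by
        intro x y (hxy : EqvGen r x y)
        by_cases hx : EqvGen r x b
        · rw [if_pos hx, if_pos (EqvGen.trans _ _ _ (EqvGen.symm _ _ hxy) hx)]
        · rw [if_neg hx, if_neg (fun hy => hx (EqvGen.trans _ _ _ hxy hy))]
          exact congrArg Sum.inl (Quotient.sound (EqvGen.mono (fun _ _ h => Or.inl h) _ _ hxy)))
  let v : Quotient (EqvGen.setoid (pairRel r a b)) ⊕ PUnit.{1} → Quotient (EqvGen.setoid r) :=
    Sum.elim
      (Quotient.lift
        (fun x => if EqvGen r x b then (Quotient.mk (EqvGen.setoid r) a)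
          else Quotient.mk (EqvGen.setoid r) x)
        (by
          intro x y (hxy : EqvGen (pairRel r a b) x y)
          rcases (char x y).1 hxy with h | ⟨h1, h2⟩ | ⟨h1, h2⟩
          · by_cases hx : EqvGen r x b
            · rw [if_pos hx, if_pos (EqvGen.trans _ _ _ (EqvGen.symm _ _ h) hx)]
            · rw [if_neg hx, if_neg (fun hy => hx (EqvGen.trans _ _ _ h hy))]
              exact Quotient.sound h
          · have hx : ¬ EqvGen r x b := fun h' =>
              hab (EqvGen.trans _ _ _ (EqvGen.symm _ _ h1) h')
            rw [if_neg hx, if_pos (EqvGen.symm _ _ h2)]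
            exact Quotient.sound h1
          · have hy : ¬ EqvGen r y b := fun h' =>
              hab (EqvGen.trans _ _ _ h2 h')
            rw [if_pos h1, if_neg hy]
            exact Quotient.sound h2))
      (fun _ => Quotient.mk (EqvGen.setoid r) b)
  have hvu : Function.LeftInverse v u := by
    intro q
    induction q using Quotient.ind with
    | _ x =>
      show v (u (Quotient.mk _ x)) = _
      by_cases hx : EqvGen r x b
      · simp only [u, Quotient.lift_mk, if_pos hx, v, Sum.elim_inr]
        exact Quotient.sound (EqvGen.symm _ _ hx)
      · simp only [u, Quotient.lift_mk, if_neg hx, v, Sum.elim_inl, Quotient.lift_mk,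
          if_neg hx]
  have huv : Function.RightInverse v u := by
    intro q
    rcases q with q | ⟨⟩
    · induction q using Quotient.ind with
      | _ x =>
        show u (v (Sum.inl (Quotient.mk _ x))) = _
        by_cases hx : EqvGen r x b
        · simp only [v, Sum.elim_inl, Quotient.lift_mk, if_pos hx, u, if_neg hab]
          refine congrArg Sum.inl (Quotient.sound ?_)
          exact (char a x).2 (Or.inr (Or.inl ⟨EqvGen.refl _, EqvGen.symm _ _ hx⟩))
        · simp only [v, Sum.elim_inl, Quotient.lift_mk, if_neg hx, u]
    · show u (Quotient.mk _ b) = _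
      simp only [u, Quotient.lift_mk, if_pos (EqvGen.refl b)]
  have : Nat.card (Quotient (EqvGen.setoid r))
      = Nat.card (Quotient (EqvGen.setoid (pairRel r a b)) ⊕ PUnit) :=
    Nat.card_congr ⟨u, v, hvu, huv⟩
  rw [this, Nat.card_sum]
  simp

lemma quotientCardEqOfRetract {β : Type*} (r : α → α → Prop) (r' : β → β → Prop)
    (ρ : α → β) (ι : β → α) (hρι : ∀ y, ρ (ι y) = y)
    (h1 : ∀ x y, r x y → EqvGen r' (ρ x) (ρ y))
    (h2 : ∀ x y, r' x y → EqvGen r (ι x) (ι y))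
    (h3 : ∀ x, EqvGen r (ι (ρ x)) x) :
    Nat.card (Quotient (EqvGen.setoid r)) = Nat.card (Quotient (EqvGen.setoid r')) := by
  have hmap : ∀ x y, EqvGen r x y → EqvGen r' (ρ x) (ρ y) := by
    intro x y h
    induction h with
    | rel u v h' => exact h1 _ _ h'
    | refl u => exact EqvGen.refl _
    | symm u v _ ih => exact EqvGen.symm _ _ ih
    | trans u v w _ _ ih1 ih2 => exact EqvGen.trans _ _ _ ih1 ih2
  have hmap' : ∀ x y, EqvGen r' x y → EqvGen r (ι x) (ι y) := by
    intro x y h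
    induction h with
    | rel u v h' => exact h2 _ _ h'
    | refl u => exact EqvGen.refl _
    | symm u v _ ih => exact EqvGen.symm _ _ ih
    | trans u v w _ _ ih1 ih2 => exact EqvGen.trans _ _ _ ih1 ih2
  let f : Quotient (EqvGen.setoid r) → Quotient (EqvGen.setoid r') :=
    Quotient.lift (fun x => Quotient.mk (EqvGen.setoid r') (ρ x))
      (fun x y h => Quotient.sound (hmap x y h))
  let g : Quotient (EqvGen.setoid r') → Quotient (EqvGen.setoid r) :=
    Quotient.lift (fun y => Quotient.mk (EqvGen.setoid r) (ι y))
      (fun x y h => Quotient.sound (hmap' x y h))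
  refine Nat.card_congr ⟨f, g, ?_, ?_⟩
  · intro q
    induction q using Quotient.ind with
    | _ x => exact Quotient.sound (h3 x)
  · intro q
    induction q using Quotient.ind with
    | _ y => show Quotient.mk _ (ρ (ι y)) = _; rw [hρι]

lemma card_quotient_le [Finite α] (s : Setoid α) : Nat.card (Quotient s) ≤ Nat.card α :=
  Nat.card_le_card_of_surjective (Quotient.mk s) Quotient.mk_surjective

lemma walk_color {W γ : Type*} {G : SimpleGraph W} (φ : W → γ)
    (h : ∀ x y, G.Adj x y → φ x = φ y) {u v : W} (w : G.Walk u v) : φ u = φ v := by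
  induction w with
  | nil => rfl
  | cons h' p ih => exact (h _ _ h').trans ih

lemma eqvGen_map {α β : Type*} {r : α → α → Prop} {r' : β → β → Prop} {g : α → β}
    (h1 : ∀ x y, r x y → EqvGen r' (g x) (g y)) :
    ∀ x y, EqvGen r x y → EqvGen r' (g x) (g y) := by
  intro x y h
  induction h with
  | rel u v h' => exact h1 _ _ h'
  | refl u => exact EqvGen.refl _
  | symm u v _ ih => exact EqvGen.symm _ _ ih
  | trans u v w _ _ ih1 ih2 => exact EqvGen.trans _ _ _ ih1 ih2

lemma eqvGen_of_equivalence {α : Type*} {r : α → α → Prop} (h : Equivalence r) :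
    ∀ x y, EqvGen r x y → r x y := by
  intro x y hxy
  induction hxy with
  | rel u v h' => exact h'
  | refl u => exact h.refl u
  | symm u v _ ih => exact h.symm ih
  | trans u v w _ _ ih1 ih2 => exact h.trans ih1 ih2

lemma eqvGen_setoid_eq' {α : Type*} {r s : α → α → Prop}
    (h : ∀ x y, EqvGen r x y ↔ EqvGen s x y) :
    EqvGen.setoid r = EqvGen.setoid s :=
  Setoid.ext h

end VvAux



namespace VvAux

open Relation

universe u v

section Basics

variable {V : Type u} {E : Type v} (src trg : E → V)

/-- generators of the component setoid -/
def compGen : V → V → Prop := fun u v => ∃ e, u = src e ∧ v = trg e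

variable (P : OrientedEdgePartition src trg)

/-- generators of the vertex setoid -/
def vGen : V → V → Prop := fun u v => ∃ e e', P.rel e e' ∧
    ((u = (P.ori e).1 ∧ v = (P.ori e').1) ∨ (u = (P.ori e).2 ∧ v = (P.ori e').2))

lemma compSetoid_eq : compSetoid src trg = EqvGen.setoid (compGen src trg) := rfl

lemma vertexSetoid_eq : P.vertexSetoid = EqvGen.setoid (vGen src trg P) := rfl

lemma comp_src_trg (e : E) : EqvGen (compGen src trg) (src e) (trg e) :=
  EqvGen.rel _ _ ⟨e, rfl, rfl⟩

lemma comp_ori1 (e : E) : EqvGen (compGen src trg) (src e) ((P.ori e).1) := by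
  rcases P.ori_spec e with h | h <;> rw [h]
  · exact EqvGen.refl _
  · exact comp_src_trg src trg e

lemma comp_ori2 (e : E) : EqvGen (compGen src trg) (src e) ((P.ori e).2) := by
  rcases P.ori_spec e with h | h <;> rw [h]
  · exact comp_src_trg src trg e
  · exact EqvGen.refl _

lemma oriPair (e : E) : ({(P.ori e).1, (P.ori e).2} : Set V) = {src e, trg e} := by
  rcases P.ori_spec e with h | h <;> rw [h]
  exact Set.pair_comm _ _

lemma sameEnds_iff (e f : E) : sameEnds src trg e f ↔
    (src e = src f ∧ trg e = trg f) ∨ (src e = trg f ∧ trg e = src f) :=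
  Set.pair_eq_pair_iff

lemma loop_of_sameEnds {e f : E} (h : sameEnds src trg e f) (hl : src e = trg e) :
    src f = trg f := by
  rcases (sameEnds_iff src trg e f).1 h with ⟨h1, h2⟩ | ⟨h1, h2⟩
  · rw [← h1, ← h2]; exact hl
  · rw [← h1, ← h2]; exact hl.symm

lemma comp_of_sameEnds {e f : E} (h : sameEnds src trg e f) :
    EqvGen (compGen src trg) (src e) (src f) := by
  rcases (sameEnds_iff src trg e f).1 h with ⟨h1, h2⟩ | ⟨h1, h2⟩
  · rw [h1]; exact EqvGen.refl _
  · rw [h1]; exact EqvGen.symm _ _ (comp_src_trg src trg f)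

lemma sameEnds_of_ori_eq {e f : E} (h : P.ori e = P.ori f) : sameEnds src trg e f := by
  show ({src e, trg e} : Set V) = {src f, trg f}
  rw [← oriPair src trg P e, ← oriPair src trg P f, h]

end Basics

section BaseCase

variable {V : Type u} {E : Type v} [Fintype V] [Fintype E]
  (src trg : E → V) (P : OrientedEdgePartition src trg)

/-- The conclusion of the main theorem. -/
abbrev Concl : Prop :=
  (Nat.card (Quotient P.vertexSetoid) : ℤ) ≤
      (Fintype.card V : ℤ) -
        2 * ((Nat.card (Quotient (compSetoid src trg)) : ℤ) - 1) ∧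
    ((Nat.card (Quotient P.vertexSetoid) : ℤ) =
        (Fintype.card V : ℤ) -
          2 * ((Nat.card (Quotient (compSetoid src trg)) : ℤ) - 1) ↔
      isTreeBip (edgeComp src trg) (edgeBlock P))

lemma base (hconn : (bipGraph (edgeComp src trg) (edgeBlock P)).Connected)
    (hc1 : Nat.card (Quotient (compSetoid src trg)) = 1) : Concl src trg P := by
  classical
  have hnV : Nat.card (Quotient P.vertexSetoid) ≤ Fintype.card V := by
    rw [← Nat.card_eq_fintype_card]
    exact card_quotient_le _
  constructor
  · rw [hc1]
    push_cast
    omega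
  rw [hc1]
  constructor
  · -- equality implies tree
    intro heq
    have hn : Nat.card (Quotient P.vertexSetoid) = Fintype.card V := by
      push_cast at heq
      omega
    have hbij : Function.Bijective (Quotient.mk P.vertexSetoid) := by
      refine (Nat.bijective_iff_surjective_and_card _).2 ⟨Quotient.mk_surjective, ?_⟩
      rw [hn, Nat.card_eq_fintype_card]
    have hori : ∀ e e', P.rel e e' → P.ori e = P.ori e' := by
      intro e e' h
      have h1 : (P.ori e).1 = (P.ori e').1 := hbij.1 (Quotient.sound
        (EqvGen.rel _ _ ⟨e, e', h, Or.inl ⟨rfl, rfl⟩⟩))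
      have h2 : (P.ori e).2 = (P.ori e').2 := hbij.1 (Quotient.sound
        (EqvGen.rel _ _ ⟨e, e', h, Or.inr ⟨rfl, rfl⟩⟩))
      exact Prod.ext h1 h2
    have hset : sameEndsSetoid src trg = P.rel := by
      refine Setoid.ext fun e e' => ⟨P.sameEnds_le e e', fun h => ?_⟩
      exact sameEnds_of_ori_eq src trg P (hori e e' h)
    refine ⟨hconn, ?_⟩
    rw [Nat.card_sum, hc1, hset]
    omega
  · -- tree implies equality
    intro ⟨_, hcard⟩
    rw [Nat.card_sum, hc1] at hcard
    have htm : Nat.card (Quotient (sameEndsSetoid src trg)) = Nat.card (Quotient P.rel) := by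
      omega
    have hsurj : Function.Surjective (edgeBlock P) := by
      intro q
      obtain ⟨e, rfl⟩ := Quotient.exists_rep q
      exact ⟨Quotient.mk _ e, rfl⟩
    have hbij : Function.Bijective (edgeBlock P) :=
      (Nat.bijective_iff_surjective_and_card _).2 ⟨hsurj, htm⟩
    have hrelsame : ∀ e e', P.rel e e' → sameEnds src trg e e' := by
      intro e e' h
      exact Quotient.exact (hbij.1 (a₁ := Quotient.mk _ e) (a₂ := Quotient.mk _ e')
        (Quotient.sound h))
    have hgen : ∀ u v, vGen src trg P u v → u = v := by
      rintro u v ⟨e, e', h, (⟨rfl, rfl⟩ | ⟨rfl, rfl⟩)⟩ <;>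
        rw [P.ori_const e e' (hrelsame e e' h)]
    have hinj : Function.Injective (Quotient.mk P.vertexSetoid) := by
      intro u v h
      exact eqvGen_sub_eq hgen u v (Quotient.exact h)
    have : Nat.card (Quotient P.vertexSetoid) = Fintype.card V := by
      rw [← Nat.card_eq_fintype_card]
      exact (Nat.card_congr (Equiv.ofBijective _ ⟨hinj, Quotient.mk_surjective⟩)).symm
    rw [this]
    push_cast
    ring

end BaseCase

section Surgery

variable {V : Type u} {E : Type v} (src trg : E → V) (P : OrientedEdgePartition src trg)
  (es eo : E)

/-- Hypotheses for the surgery merging two components. -/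
structure SurgeryFacts : Prop where
  hrel : P.rel es eo
  hcomp : ¬ EqvGen (compGen src trg) (src es) (src eo)
  hnl : ∀ e : E, src e ≠ trg e

/-- The vertex set after removing the two endpoints of `eo`. -/
abbrev Vp := {v : V // v ≠ (P.ori eo).1 ∧ v ≠ (P.ori eo).2}

open Classical in
/-- the retraction on `V` -/
noncomputable def rhov : V → V := fun v => if v = (P.ori eo).1 then (P.ori es).1 else if v = (P.ori eo).2 then (P.ori es).2 else v

variable {src trg P es eo}

lemma sgA (H : SurgeryFacts src trg P es eo) : ((P.ori es).1 : V) ≠ (P.ori es).2 := by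
  rcases P.ori_spec es with h | h <;> rw [h]
  · exact H.hnl es
  · exact (H.hnl es).symm

lemma sgB (H : SurgeryFacts src trg P es eo) : ((P.ori eo).1 : V) ≠ (P.ori eo).2 := by
  rcases P.ori_spec eo with h | h <;> rw [h]
  · exact H.hnl eo
  · exact (H.hnl eo).symm

lemma sgNc (H : SurgeryFacts src trg P es eo) :
    ∀ x y : V, EqvGen (compGen src trg) (src es) x → EqvGen (compGen src trg) (src eo) y → ¬ EqvGen (compGen src trg) x y :=
  fun _ _ hx hy hxy =>
    H.hcomp (EqvGen.trans _ _ _ hx (EqvGen.trans _ _ _ hxy (EqvGen.symm _ _ hy)))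

lemma sgNe (H : SurgeryFacts src trg P es eo) :
    ∀ x y : V, EqvGen (compGen src trg) (src es) x → EqvGen (compGen src trg) (src eo) y → x ≠ y :=
  fun x y hx hy hxy => sgNc H x y hx hy (hxy ▸ EqvGen.refl x)

lemma sgInA1 : EqvGen (compGen src trg) (src es) ((P.ori es).1 : V) := comp_ori1 src trg P es
lemma sgInA2 : EqvGen (compGen src trg) (src es) ((P.ori es).2 : V) := comp_ori2 src trg P es
lemma sgInB1 : EqvGen (compGen src trg) (src eo) ((P.ori eo).1 : V) := comp_ori1 src trg P eo
lemma sgInB2 : EqvGen (compGen src trg) (src eo) ((P.ori eo).2 : V) := comp_ori2 src trg P eo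

lemma sgOutA1 (H : SurgeryFacts src trg P es eo) : ¬ EqvGen (compGen src trg) (src eo) ((P.ori es).1 : V) :=
  fun h => sgNc H _ _ sgInA1 h (EqvGen.refl _)

lemma sgOutA2 (H : SurgeryFacts src trg P es eo) : ¬ EqvGen (compGen src trg) (src eo) ((P.ori es).2 : V) :=
  fun h => sgNc H _ _ sgInA2 h (EqvGen.refl _)

lemma rhov_b1 : rhov src trg P es eo (P.ori eo).1 = (P.ori es).1 := by
  unfold rhov
  rw [if_pos rfl]

lemma rhov_b2 (H : SurgeryFacts src trg P es eo) : rhov src trg P es eo (P.ori eo).2 = (P.ori es).2 := by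
  unfold rhov
  rw [if_neg (sgB H).symm, if_pos rfl]

lemma rhov_fix {v : V} (h1 : v ≠ (P.ori eo).1) (h2 : v ≠ (P.ori eo).2) : rhov src trg P es eo v = v := by
  unfold rhov
  rw [if_neg h1, if_neg h2]

lemma rhov_a1 (H : SurgeryFacts src trg P es eo) : rhov src trg P es eo (P.ori es).1 = (P.ori es).1 :=
  rhov_fix (sgNe H _ _ sgInA1 sgInB1) (sgNe H _ _ sgInA1 sgInB2)

lemma rhov_a2 (H : SurgeryFacts src trg P es eo) : rhov src trg P es eo (P.ori es).2 = (P.ori es).2 :=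
  rhov_fix (sgNe H _ _ sgInA2 sgInB1) (sgNe H _ _ sgInA2 sgInB2)

lemma rhov_ne (H : SurgeryFacts src trg P es eo) (v : V) :
    rhov src trg P es eo v ≠ (P.ori eo).1 ∧ rhov src trg P es eo v ≠ (P.ori eo).2 := by
  unfold rhov
  split_ifs with h1 h2
  · exact ⟨sgNe H _ _ sgInA1 sgInB1, sgNe H _ _ sgInA1 sgInB2⟩
  · exact ⟨sgNe H _ _ sgInA2 sgInB1, sgNe H _ _ sgInA2 sgInB2⟩
  · exact ⟨h1, h2⟩

/-- the retraction onto the smaller vertex set -/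
noncomputable def rho (H : SurgeryFacts src trg P es eo) : V → Vp src trg P eo :=
  fun v => ⟨rhov src trg P es eo v, rhov_ne H v⟩

/-- inclusion -/
def iov : Vp src trg P eo → V := Subtype.val

lemma rho_iov (H : SurgeryFacts src trg P es eo) (y : Vp src trg P eo) :
    rho H (iov y) = y :=
  Subtype.ext (rhov_fix y.2.1 y.2.2)

/-- new source map -/
noncomputable def srcp (H : SurgeryFacts src trg P es eo) : E → Vp src trg P eo :=
  fun e => rho H (src e)

/-- new target map -/
noncomputable def trgp (H : SurgeryFacts src trg P es eo) : E → Vp src trg P eo :=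
  fun e => rho H (trg e)

lemma rhov_inj_o (H : SurgeryFacts src trg P es eo) {x y : V}
    (hx : EqvGen (compGen src trg) (src eo) x) (hy : EqvGen (compGen src trg) (src eo) y)
    (h : rhov src trg P es eo x = rhov src trg P es eo y) : x = y := by
  by_cases h1 : x = (P.ori eo).1
  · rw [h1, rhov_b1] at h
    by_cases h3 : y = (P.ori eo).1
    · rw [h1, h3]
    by_cases h4 : y = (P.ori eo).2
    · rw [h4, rhov_b2 H] at h
      exact absurd h (sgA H)
    · rw [rhov_fix h3 h4] at h
      exact absurd (by rwa [← h] at hy) (sgOutA1 H)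
  by_cases h2 : x = (P.ori eo).2
  · rw [h2, rhov_b2 H] at h
    by_cases h3 : y = (P.ori eo).1
    · rw [h3, rhov_b1] at h
      exact absurd h.symm (sgA H)
    by_cases h4 : y = (P.ori eo).2
    · rw [h2, h4]
    · rw [rhov_fix h3 h4] at h
      exact absurd (by rwa [← h] at hy) (sgOutA2 H)
  · rw [rhov_fix h1 h2] at h
    by_cases h3 : y = (P.ori eo).1
    · rw [h3, rhov_b1] at h
      exact absurd (by rwa [h] at hx) (sgOutA1 H)
    by_cases h4 : y = (P.ori eo).2
    · rw [h4, rhov_b2 H] at h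
      exact absurd (by rwa [h] at hx) (sgOutA2 H)
    · rwa [rhov_fix h3 h4] at h

lemma not_incomp_ne_b (H : SurgeryFacts src trg P es eo) {y : V}
    (hy : ¬ EqvGen (compGen src trg) (src eo) y) : y ≠ (P.ori eo).1 ∧ y ≠ (P.ori eo).2 :=
  ⟨fun h => hy (h ▸ sgInB1), fun h => hy (h ▸ sgInB2)⟩

lemma rhov_out (H : SurgeryFacts src trg P es eo) {y : V}
    (hy : ¬ EqvGen (compGen src trg) (src eo) y) : rhov src trg P es eo y = y :=
  rhov_fix (not_incomp_ne_b H hy).1 (not_incomp_ne_b H hy).2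

lemma rhov_cross (H : SurgeryFacts src trg P es eo) {x y : V}
    (hx : EqvGen (compGen src trg) (src eo) x) (hy : ¬ EqvGen (compGen src trg) (src eo) y)
    (h : rhov src trg P es eo x = rhov src trg P es eo y) :
    (x = (P.ori eo).1 ∧ y = (P.ori es).1) ∨ (x = (P.ori eo).2 ∧ y = (P.ori es).2) := by
  rw [rhov_out H hy] at h
  by_cases h1 : x = (P.ori eo).1
  · rw [h1, rhov_b1] at h
    exact Or.inl ⟨h1, h.symm⟩
  by_cases h2 : x = (P.ori eo).2
  · rw [h2, rhov_b2 H] at h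
    exact Or.inr ⟨h2, h.symm⟩
  · rw [rhov_fix h1 h2] at h
    exact absurd (h ▸ hx) hy

lemma sgkey (H : SurgeryFacts src trg P es eo) {x y x' y' : V}
    (hxy : EqvGen (compGen src trg) x y) (hxy' : EqvGen (compGen src trg) x' y') (hne : x ≠ y) (hne' : x' ≠ y')
    (h1 : rhov src trg P es eo x = rhov src trg P es eo x')
    (h2 : rhov src trg P es eo y = rhov src trg P es eo y') :
    (x = x' ∧ y = y') ∨
      (x = (P.ori eo).1 ∧ y = (P.ori eo).2 ∧ x' = (P.ori es).1 ∧ y' = (P.ori es).2) ∨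
      (x = (P.ori eo).2 ∧ y = (P.ori eo).1 ∧ x' = (P.ori es).2 ∧ y' = (P.ori es).1) ∨
      (x' = (P.ori eo).1 ∧ y' = (P.ori eo).2 ∧ x = (P.ori es).1 ∧ y = (P.ori es).2) ∨
      (x' = (P.ori eo).2 ∧ y' = (P.ori eo).1 ∧ x = (P.ori es).2 ∧ y = (P.ori es).1) := by
  by_cases hx : EqvGen (compGen src trg) (src eo) x <;> by_cases hx' : EqvGen (compGen src trg) (src eo) x'
  · have hy : EqvGen (compGen src trg) (src eo) y := EqvGen.trans _ _ _ hx hxy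
    have hy' : EqvGen (compGen src trg) (src eo) y' := EqvGen.trans _ _ _ hx' hxy'
    exact Or.inl ⟨rhov_inj_o H hx hx' h1, rhov_inj_o H hy hy' h2⟩
  · have hy : EqvGen (compGen src trg) (src eo) y := EqvGen.trans _ _ _ hx hxy
    have hy' : ¬ EqvGen (compGen src trg) (src eo) y' :=
      fun h => hx' (EqvGen.trans _ _ _ h (EqvGen.symm _ _ hxy'))
    rcases rhov_cross H hx hx' h1 with ⟨hh1, hh2⟩ | ⟨hh1, hh2⟩ <;>
      rcases rhov_cross H hy hy' h2 with ⟨hh3, hh4⟩ | ⟨hh3, hh4⟩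
    · exact absurd (hh1.trans hh3.symm) hne
    · exact Or.inr (Or.inl ⟨hh1, hh3, hh2, hh4⟩)
    · exact Or.inr (Or.inr (Or.inl ⟨hh1, hh3, hh2, hh4⟩))
    · exact absurd (hh1.trans hh3.symm) hne
  · have hy' : EqvGen (compGen src trg) (src eo) y' := EqvGen.trans _ _ _ hx' hxy'
    have hy : ¬ EqvGen (compGen src trg) (src eo) y :=
      fun h => hx (EqvGen.trans _ _ _ h (EqvGen.symm _ _ hxy))
    rcases rhov_cross H hx' hx h1.symm with ⟨hh1, hh2⟩ | ⟨hh1, hh2⟩ <;>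
      rcases rhov_cross H hy' hy h2.symm with ⟨hh3, hh4⟩ | ⟨hh3, hh4⟩
    · exact absurd (hh1.trans hh3.symm) hne'
    · exact Or.inr (Or.inr (Or.inr (Or.inl ⟨hh1, hh3, hh2, hh4⟩)))
    · exact Or.inr (Or.inr (Or.inr (Or.inr ⟨hh1, hh3, hh2, hh4⟩)))
    · exact absurd (hh1.trans hh3.symm) hne'
  · have hy : ¬ EqvGen (compGen src trg) (src eo) y :=
      fun h => hx (EqvGen.trans _ _ _ h (EqvGen.symm _ _ hxy))
    have hy' : ¬ EqvGen (compGen src trg) (src eo) y' :=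
      fun h => hx' (EqvGen.trans _ _ _ h (EqvGen.symm _ _ hxy'))
    rw [rhov_out H hx, rhov_out H hx'] at h1
    rw [rhov_out H hy, rhov_out H hy'] at h2
    exact Or.inl ⟨h1, h2⟩

lemma mk_se_o (H : SurgeryFacts src trg P es eo) {g : E} (h1 : src g = (P.ori eo).1)
    (h2 : trg g = (P.ori eo).2) : sameEnds src trg g eo := by
  show ({src g, trg g} : Set V) = _
  rw [h1, h2]
  exact oriPair src trg P eo

lemma mk_se_o' (H : SurgeryFacts src trg P es eo) {g : E} (h1 : src g = (P.ori eo).2)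
    (h2 : trg g = (P.ori eo).1) : sameEnds src trg g eo := by
  show ({src g, trg g} : Set V) = _
  rw [h1, h2, Set.pair_comm]
  exact oriPair src trg P eo

lemma mk_se_s (H : SurgeryFacts src trg P es eo) {g : E} (h1 : src g = (P.ori es).1)
    (h2 : trg g = (P.ori es).2) : sameEnds src trg g es := by
  show ({src g, trg g} : Set V) = _
  rw [h1, h2]
  exact oriPair src trg P es

lemma mk_se_s' (H : SurgeryFacts src trg P es eo) {g : E} (h1 : src g = (P.ori es).2)
    (h2 : trg g = (P.ori es).1) : sameEnds src trg g es := by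
  show ({src g, trg g} : Set V) = _
  rw [h1, h2, Set.pair_comm]
  exact oriPair src trg P es

lemma sgSameEnds_iff (H : SurgeryFacts src trg P es eo) (e f : E) :
    sameEnds (srcp H) (trgp H) e f ↔
      (sameEnds src trg e f ∨ (sameEnds src trg e eo ∧ sameEnds src trg f es) ∨
        (sameEnds src trg e es ∧ sameEnds src trg f eo)) := by
  constructor
  · intro h
    rcases (sameEnds_iff _ _ e f).1 h with ⟨h1, h2⟩ | ⟨h1, h2⟩
    · have h1' : rhov src trg P es eo (src e) = rhov src trg P es eo (src f) :=
        congrArg Subtype.val h1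
      have h2' : rhov src trg P es eo (trg e) = rhov src trg P es eo (trg f) :=
        congrArg Subtype.val h2
      rcases sgkey H (comp_src_trg src trg e) (comp_src_trg src trg f)
          (H.hnl e) (H.hnl f) h1' h2' with
        ⟨hs, ht⟩ | ⟨p1, p2, p3, p4⟩ | ⟨p1, p2, p3, p4⟩ | ⟨p1, p2, p3, p4⟩ | ⟨p1, p2, p3, p4⟩
      · exact Or.inl ((sameEnds_iff src trg e f).2 (Or.inl ⟨hs, ht⟩))
      · exact Or.inr (Or.inl ⟨mk_se_o H p1 p2, mk_se_s H p3 p4⟩)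
      · exact Or.inr (Or.inl ⟨mk_se_o' H p1 p2, mk_se_s' H p3 p4⟩)
      · exact Or.inr (Or.inr ⟨mk_se_s H p3 p4, mk_se_o H p1 p2⟩)
      · exact Or.inr (Or.inr ⟨mk_se_s' H p3 p4, mk_se_o' H p1 p2⟩)
    · have h1' : rhov src trg P es eo (src e) = rhov src trg P es eo (trg f) :=
        congrArg Subtype.val h1
      have h2' : rhov src trg P es eo (trg e) = rhov src trg P es eo (src f) :=
        congrArg Subtype.val h2
      rcases sgkey H (comp_src_trg src trg e)
          (EqvGen.symm _ _ (comp_src_trg src trg f)) (H.hnl e) (H.hnl f).symm h1' h2' with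
        ⟨hs, ht⟩ | ⟨p1, p2, p3, p4⟩ | ⟨p1, p2, p3, p4⟩ | ⟨p1, p2, p3, p4⟩ | ⟨p1, p2, p3, p4⟩
      · exact Or.inl ((sameEnds_iff src trg e f).2 (Or.inr ⟨hs, ht⟩))
      · exact Or.inr (Or.inl ⟨mk_se_o H p1 p2, mk_se_s' H p4 p3⟩)
      · exact Or.inr (Or.inl ⟨mk_se_o' H p1 p2, mk_se_s H p4 p3⟩)
      · exact Or.inr (Or.inr ⟨mk_se_s H p3 p4, mk_se_o' H p2 p1⟩)
      · exact Or.inr (Or.inr ⟨mk_se_s' H p3 p4, mk_se_o H p2 p1⟩)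
  · have himg : ∀ g : E, ({srcp H g, trgp H g} : Set (Vp src trg P eo)) =
        rho H '' {src g, trg g} := fun g => (Set.image_pair (rho H) (src g) (trg g)).symm
    have hBA : rho H '' {((P.ori eo).1 : V), (P.ori eo).2} = rho H '' {((P.ori es).1 : V), (P.ori es).2} := by
      rw [Set.image_pair, Set.image_pair]
      congr 1
      · exact Subtype.ext ((rhov_b1).trans (rhov_a1 H).symm)
      · exact congrArg (fun x => ({x} : Set (Vp src trg P eo)))
          (Subtype.ext ((rhov_b2 H).trans (rhov_a2 H).symm))
    rintro (h | ⟨h1, h2⟩ | ⟨h1, h2⟩)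
    · show ({srcp H e, trgp H e} : Set _) = _
      rw [himg e, himg f, h]
    · show ({srcp H e, trgp H e} : Set _) = _
      rw [himg e, himg f, show ({src e, trg e} : Set V) = _ from h1,
        show ({src f, trg f} : Set V) = _ from h2, ← oriPair src trg P eo,
        ← oriPair src trg P es, hBA]
    · show ({srcp H e, trgp H e} : Set _) = _
      rw [himg e, himg f, show ({src e, trg e} : Set V) = _ from h1,
        show ({src f, trg f} : Set V) = _ from h2, ← oriPair src trg P es,
        ← oriPair src trg P eo, hBA]

end Surgery

section Surgery2

variable {V : Type u} {E : Type v} {src trg : E → V} {P : OrientedEdgePartition src trg}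
  {es eo : E}

/-- the induced oriented partition on the surgered graph -/
noncomputable def Pp (H : SurgeryFacts src trg P es eo) :
    OrientedEdgePartition (srcp H) (trgp H) where
  rel := P.rel
  sameEnds_le := by
    intro e f h
    rcases (sgSameEnds_iff H e f).1 h with h | ⟨h1, h2⟩ | ⟨h1, h2⟩
    · exact P.sameEnds_le e f h
    · exact P.rel.iseqv.trans (P.sameEnds_le e eo h1)
        (P.rel.iseqv.trans (P.rel.iseqv.symm H.hrel)
          (P.rel.iseqv.symm (P.sameEnds_le f es h2)))
    · exact P.rel.iseqv.trans (P.sameEnds_le e es h1)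
        (P.rel.iseqv.trans H.hrel (P.rel.iseqv.symm (P.sameEnds_le f eo h2)))
  ori := fun e => (rho H (P.ori e).1, rho H (P.ori e).2)
  ori_spec := by
    intro e
    rcases P.ori_spec e with h | h
    · left; rw [h]; rfl
    · right; rw [h]; rfl
  ori_const := by
    intro e f h
    rcases (sgSameEnds_iff H e f).1 h with h' | ⟨h1, h2⟩ | ⟨h1, h2⟩
    · rw [P.ori_const e f h']
    · rw [P.ori_const e eo h1, P.ori_const f es h2]
      exact Prod.ext (Subtype.ext (rhov_b1.trans (rhov_a1 H).symm))
        (Subtype.ext ((rhov_b2 H).trans (rhov_a2 H).symm))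
    · rw [P.ori_const e es h1, P.ori_const f eo h2]
      exact Prod.ext (Subtype.ext ((rhov_a1 H).trans rhov_b1.symm))
        (Subtype.ext ((rhov_a2 H).trans (rhov_b2 H).symm))

lemma sg_hnl (H : SurgeryFacts src trg P es eo) : ∀ e, srcp H e ≠ trgp H e := by
  intro e he
  have h : rhov src trg P es eo (src e) = rhov src trg P es eo (trg e) :=
    congrArg Subtype.val he
  by_cases hin : EqvGen (compGen src trg) (src eo) (src e)
  · exact H.hnl e (rhov_inj_o H hin
      (EqvGen.trans _ _ _ hin (comp_src_trg src trg e)) h)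
  · have hin2 : ¬ EqvGen (compGen src trg) (src eo) (trg e) := fun h' =>
      hin (EqvGen.trans _ _ _ h' (EqvGen.symm _ _ (comp_src_trg src trg e)))
    rw [rhov_out H hin, rhov_out H hin2] at h
    exact H.hnl e h

lemma sg_rho_v (H : SurgeryFacts src trg P es eo) (v : V) :
    EqvGen (vGen src trg P) (rhov src trg P es eo v) v := by
  by_cases h1 : v = (P.ori eo).1
  · rw [h1, rhov_b1]
    exact EqvGen.rel _ _ ⟨es, eo, H.hrel, Or.inl ⟨rfl, rfl⟩⟩
  by_cases h2 : v = (P.ori eo).2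
  · rw [h2, rhov_b2 H]
    exact EqvGen.rel _ _ ⟨es, eo, H.hrel, Or.inr ⟨rfl, rfl⟩⟩
  · rw [rhov_fix h1 h2]
    exact EqvGen.refl _

lemma sg_n (H : SurgeryFacts src trg P es eo) :
    Nat.card (Quotient (Pp H).vertexSetoid) = Nat.card (Quotient P.vertexSetoid) := by
  refine (quotientCardEqOfRetract (vGen src trg P) (vGen (srcp H) (trgp H) (Pp H))
    (rho H) iov (rho_iov H) ?_ ?_ ?_).symm
  · rintro x y ⟨e, f, hre, (⟨rfl, rfl⟩ | ⟨rfl, rfl⟩)⟩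
    · exact EqvGen.rel _ _ ⟨e, f, hre, Or.inl ⟨rfl, rfl⟩⟩
    · exact EqvGen.rel _ _ ⟨e, f, hre, Or.inr ⟨rfl, rfl⟩⟩
  · rintro x y ⟨e, f, hre, (⟨rfl, rfl⟩ | ⟨rfl, rfl⟩)⟩
    · exact EqvGen.trans _ _ _ (sg_rho_v H (P.ori e).1)
        (EqvGen.trans _ _ _ (EqvGen.rel _ _ ⟨e, f, hre, Or.inl ⟨rfl, rfl⟩⟩)
          (EqvGen.symm _ _ (sg_rho_v H (P.ori f).1)))
    · exact EqvGen.trans _ _ _ (sg_rho_v H (P.ori e).2)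
        (EqvGen.trans _ _ _ (EqvGen.rel _ _ ⟨e, f, hre, Or.inr ⟨rfl, rfl⟩⟩)
          (EqvGen.symm _ _ (sg_rho_v H (P.ori f).2)))
  · exact fun x => sg_rho_v H x

lemma sg_rho_c (H : SurgeryFacts src trg P es eo) (v : V) :
    EqvGen (pairRel (pairRel (compGen src trg) (P.ori es).1 (P.ori eo).1)
      (P.ori es).2 (P.ori eo).2) (rhov src trg P es eo v) v := by
  by_cases h1 : v = (P.ori eo).1
  · rw [h1, rhov_b1]
    exact EqvGen.rel _ _ (Or.inl (Or.inr ⟨rfl, rfl⟩))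
  by_cases h2 : v = (P.ori eo).2
  · rw [h2, rhov_b2 H]
    exact EqvGen.rel _ _ (Or.inr ⟨rfl, rfl⟩)
  · rw [rhov_fix h1 h2]
    exact EqvGen.refl _

lemma sg_c [Finite V] (H : SurgeryFacts src trg P es eo) :
    Nat.card (Quotient (compSetoid (srcp H) (trgp H))) + 1
      = Nat.card (Quotient (compSetoid src trg)) := by
  have e1 : Nat.card (Quotient (EqvGen.setoid (pairRel (pairRel (compGen src trg)
      (P.ori es).1 (P.ori eo).1) (P.ori es).2 (P.ori eo).2)))
      = Nat.card (Quotient (compSetoid (srcp H) (trgp H))) := by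
    refine quotientCardEqOfRetract _ (compGen (srcp H) (trgp H)) (rho H) iov
      (rho_iov H) ?_ ?_ ?_
    · rintro x y ((⟨e, rfl, rfl⟩ | ⟨rfl, rfl⟩) | ⟨rfl, rfl⟩)
      · exact EqvGen.rel _ _ ⟨e, rfl, rfl⟩
      · rw [show rho H (P.ori es).1 = rho H (P.ori eo).1 from
          Subtype.ext ((rhov_a1 H).trans rhov_b1.symm)]
        exact EqvGen.refl _
      · rw [show rho H (P.ori es).2 = rho H (P.ori eo).2 from
          Subtype.ext ((rhov_a2 H).trans (rhov_b2 H).symm)]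
        exact EqvGen.refl _
    · rintro x y ⟨e, rfl, rfl⟩
      exact EqvGen.trans _ _ _ (sg_rho_c H (src e))
        (EqvGen.trans _ _ _ (EqvGen.rel _ _ (Or.inl (Or.inl ⟨e, rfl, rfl⟩)))
          (EqvGen.symm _ _ (sg_rho_c H (trg e))))
    · exact fun x => sg_rho_c H x
  have hred : EqvGen (pairRel (compGen src trg) (P.ori es).1 (P.ori eo).1)
      (P.ori es).2 (P.ori eo).2 := by
    have m1 : ∀ x y, EqvGen (compGen src trg) x y →
        EqvGen (pairRel (compGen src trg) (P.ori es).1 (P.ori eo).1) x y :=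
      fun x y h => EqvGen.mono (fun _ _ hh => Or.inl hh) _ _ h
    refine EqvGen.trans _ _ _ (m1 _ _ (EqvGen.trans _ _ _ (EqvGen.symm _ _ sgInA2) sgInA1))
      (EqvGen.trans _ _ _ (EqvGen.rel _ _ (Or.inr ⟨rfl, rfl⟩))
        (m1 _ _ (EqvGen.trans _ _ _ (EqvGen.symm _ _ sgInB1) sgInB2)))
  have e2 : EqvGen.setoid (pairRel (pairRel (compGen src trg)
      (P.ori es).1 (P.ori eo).1) (P.ori es).2 (P.ori eo).2)
      = EqvGen.setoid (pairRel (compGen src trg) (P.ori es).1 (P.ori eo).1) :=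
    eqvGen_setoid_eq' (eqvGen_pairRel_redundant hred)
  have hncc : ¬ EqvGen (compGen src trg) (P.ori es).1 (P.ori eo).1 :=
    sgNc H _ _ sgInA1 sgInB1
  have e3 := mergeCard (compGen src trg) hncc
  rw [← e1, e2]
  exact e3

lemma sg_se_setoid (H : SurgeryFacts src trg P es eo) :
    sameEndsSetoid (srcp H) (trgp H)
      = EqvGen.setoid (pairRel (sameEnds src trg) es eo) := by
  refine Setoid.ext fun e f => ⟨fun h => ?_, fun h => ?_⟩
  · rcases (sgSameEnds_iff H e f).1 h with h' | ⟨h1, h2⟩ | ⟨h1, h2⟩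
    · exact EqvGen.rel _ _ (Or.inl h')
    · exact EqvGen.trans _ _ _ (EqvGen.rel _ _ (Or.inl h1))
        (EqvGen.trans _ _ _ (EqvGen.symm _ _ (EqvGen.rel _ _ (Or.inr ⟨rfl, rfl⟩)))
          (EqvGen.rel _ _ (Or.inl h2.symm)))
    · exact EqvGen.trans _ _ _ (EqvGen.rel _ _ (Or.inl h1))
        (EqvGen.trans _ _ _ (EqvGen.rel _ _ (Or.inr ⟨rfl, rfl⟩))
          (EqvGen.rel _ _ (Or.inl h2.symm)))
  · induction h with
    | rel x y h' =>
      rcases h' with h' | ⟨rfl, rfl⟩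
      · exact (sgSameEnds_iff H x y).2 (Or.inl h')
      · exact (sgSameEnds_iff H x y).2 (Or.inr (Or.inr ⟨rfl, rfl⟩))
    | refl x => exact rfl
    | symm x y _ ih => exact ih.symm
    | trans x y z _ _ ih1 ih2 => exact ih1.trans ih2

lemma sg_m [Finite E] (H : SurgeryFacts src trg P es eo) :
    Nat.card (Quotient (sameEndsSetoid (srcp H) (trgp H))) + 1
      = Nat.card (Quotient (sameEndsSetoid src trg)) := by
  have hns : ¬ EqvGen (sameEnds src trg) es eo := by
    intro h
    exact H.hcomp (comp_of_sameEnds src trg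
      (eqvGen_of_equivalence (sameEndsSetoid src trg).iseqv _ _ h))
  have e3 := mergeCard (sameEnds src trg) hns
  have e4 : EqvGen.setoid (sameEnds src trg) = sameEndsSetoid src trg :=
    Setoid.eqvGen_of_setoid (sameEndsSetoid src trg)
  rw [sg_se_setoid H, e3, e4]

end Surgery2

section Surgery3

variable {V : Type u} {E : Type v} {src trg : E → V} {P : OrientedEdgePartition src trg}
  {es eo : E}

lemma sg_conn (H : SurgeryFacts src trg P es eo)
    (hconn : (bipGraph (edgeComp src trg) (edgeBlock P)).Connected) :
    (bipGraph (edgeComp (srcp H) (trgp H)) (edgeBlock (Pp H))).Connected := by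
  have hmap : ∀ x y, compGen src trg x y →
      EqvGen (compGen (srcp H) (trgp H)) (rho H x) (rho H y) := by
    rintro x y ⟨e, rfl, rfl⟩
    exact EqvGen.rel _ _ ⟨e, rfl, rfl⟩
  let sigma : Quotient (compSetoid src trg) → Quotient (compSetoid (srcp H) (trgp H)) :=
    Quotient.lift (fun v => Quotient.mk (compSetoid (srcp H) (trgp H)) (rho H v))
      (fun x y h => Quotient.sound (eqvGen_map hmap x y h))
  have hF : ∀ x y, (bipGraph (edgeComp src trg) (edgeBlock P)).Adj x y →
      (bipGraph (edgeComp (srcp H) (trgp H)) (edgeBlock (Pp H))).Adj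
        (Sum.map sigma id x) (Sum.map sigma id y) := by
    rintro x y ⟨eb, hcase⟩
    obtain ⟨e, rfl⟩ := Quotient.exists_rep eb
    rcases hcase with ⟨rfl, rfl⟩ | ⟨rfl, rfl⟩
    · exact ⟨Quotient.mk (sameEndsSetoid (srcp H) (trgp H)) e, Or.inl ⟨rfl, rfl⟩⟩
    · exact ⟨Quotient.mk (sameEndsSetoid (srcp H) (trgp H)) e, Or.inr ⟨rfl, rfl⟩⟩
  have hsurj : Function.Surjective (Sum.map sigma (id : Quotient P.rel → Quotient P.rel)) := by
    rintro (q | b)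
    · obtain ⟨v, rfl⟩ := Quotient.exists_rep q
      refine ⟨Sum.inl (Quotient.mk (compSetoid src trg) (iov v)), ?_⟩
      have : sigma (Quotient.mk (compSetoid src trg) (iov v))
          = Quotient.mk (compSetoid (srcp H) (trgp H)) v := by
        show Quotient.mk (compSetoid (srcp H) (trgp H)) (rho H (iov v)) = _
        rw [rho_iov H]
      rw [Sum.map_inl, this]
    · exact ⟨Sum.inr b, rfl⟩
  exact SimpleGraph.Connected.map ⟨Sum.map sigma id, fun {a b} h => hF a b h⟩ hsurj hconn

lemma sg_card [Fintype V] (H : SurgeryFacts src trg P es eo) :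
    Nat.card (Vp src trg P eo) + 2 = Nat.card V := by
  classical
  rw [Nat.card_eq_fintype_card, Nat.card_eq_fintype_card, Fintype.card_subtype]
  have h3 := Finset.card_filter_add_card_filter_not
    (s := (Finset.univ : Finset V))
    (p := fun v : V => v ≠ (P.ori eo).1 ∧ v ≠ (P.ori eo).2)
  have h2 : (Finset.univ.filter
      (fun v : V => ¬(v ≠ (P.ori eo).1 ∧ v ≠ (P.ori eo).2))).card = 2 := by
    have heq : (Finset.univ.filter
        (fun v : V => ¬(v ≠ (P.ori eo).1 ∧ v ≠ (P.ori eo).2)))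
        = {(P.ori eo).1, (P.ori eo).2} := by
      ext v
      simp only [Finset.mem_filter, Finset.mem_univ, true_and, not_and_or, not_not,
        Finset.mem_insert, Finset.mem_singleton]
    rw [heq, Finset.card_insert_of_notMem (by simp [sgB H]), Finset.card_singleton]
  rw [Finset.card_univ] at h3
  omega

end Surgery3

section StepAux

variable {V : Type u} {E : Type v} [Fintype V] [Fintype E]

lemma comp_pos (src trg : E → V) (P : OrientedEdgePartition src trg)
    (hconn : (bipGraph (edgeComp src trg) (edgeBlock P)).Connected) :
    0 < Nat.card (Quotient (compSetoid src trg)) := by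
  obtain ⟨x⟩ := hconn.nonempty
  have hne : Nonempty (Quotient (compSetoid src trg)) := by
    rcases x with q | b
    · exact ⟨q⟩
    · obtain ⟨e, rfl⟩ := Quotient.exists_rep b
      exact ⟨Quotient.mk _ (src e)⟩
  exact Nat.card_pos

lemma exists_cross (src trg : E → V) (P : OrientedEdgePartition src trg)
    (hconn : (bipGraph (edgeComp src trg) (edgeBlock P)).Connected)
    (hc2 : 2 ≤ Nat.card (Quotient (compSetoid src trg))) :
    ∃ es eo : E, P.rel es eo ∧ ¬ EqvGen (compGen src trg) (src es) (src eo) := by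
  by_contra hno
  push_neg at hno
  let φ : Quotient (compSetoid src trg) ⊕ Quotient P.rel → Quotient (compSetoid src trg) :=
    Sum.elim id (Quotient.lift (fun e => Quotient.mk (compSetoid src trg) (src e))
      (fun e e' h => Quotient.sound (hno e e' h)))
  have hadj : ∀ x y, (bipGraph (edgeComp src trg) (edgeBlock P)).Adj x y → φ x = φ y := by
    rintro x y ⟨eb, (⟨rfl, rfl⟩ | ⟨rfl, rfl⟩)⟩ <;>
      obtain ⟨e, rfl⟩ := Quotient.exists_rep eb <;> rfl
  have hnt : Nontrivial (Quotient (compSetoid src trg)) := by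
    haveI := Fintype.ofFinite (Quotient (compSetoid src trg))
    rw [Nat.card_eq_fintype_card] at hc2
    exact Fintype.one_lt_card_iff_nontrivial.1 hc2
  obtain ⟨q1, q2, hq⟩ := hnt
  obtain ⟨w⟩ := hconn.preconnected (Sum.inl q1) (Sum.inl q2)
  exact hq (walk_color φ hadj w)

lemma step (k : ℕ)
    (IH : ∀ {V' : Type u} {E' : Type v} [Fintype V'] [Fintype E']
      (src' trg' : E' → V') (P' : OrientedEdgePartition src' trg'),
      (∀ e, src' e ≠ trg' e) →
      (bipGraph (edgeComp src' trg') (edgeBlock P')).Connected →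
      Nat.card (Quotient (compSetoid src' trg')) ≤ k → Concl src' trg' P')
    (src trg : E → V) (P : OrientedEdgePartition src trg)
    (hnl : ∀ e, src e ≠ trg e)
    (hconn : (bipGraph (edgeComp src trg) (edgeBlock P)).Connected)
    (hck : Nat.card (Quotient (compSetoid src trg)) ≤ k + 1)
    (hc2 : 2 ≤ Nat.card (Quotient (compSetoid src trg))) :
    Concl src trg P := by
  classical
  obtain ⟨es, eo, hrel, hcomp⟩ := exists_cross src trg P hconn hc2
  have H : SurgeryFacts src trg P es eo := ⟨hrel, hcomp, hnl⟩
  haveI : Fintype (Vp src trg P eo) := Fintype.ofFinite _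
  have hcV := sg_card H
  have hcc := sg_c H
  have hcm := sg_m H
  have hcn := sg_n H
  have hconn' := sg_conn H hconn
  obtain ⟨hineq, hiff⟩ := IH (srcp H) (trgp H) (Pp H) (sg_hnl H) hconn' (by omega)
  rw [hcn] at hineq hiff
  have hB : Nat.card (Quotient (Pp H).rel) = Nat.card (Quotient P.rel) := rfl
  rw [← Nat.card_eq_fintype_card] at hineq hiff
  constructor
  · rw [← Nat.card_eq_fintype_card]
    omega
  · rw [← Nat.card_eq_fintype_card]
    constructor
    · intro he
      have he' : (Nat.card (Quotient P.vertexSetoid) : ℤ)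
          = (Nat.card (Vp src trg P eo) : ℤ)
            - 2 * ((Nat.card (Quotient (compSetoid (srcp H) (trgp H))) : ℤ) - 1) := by
        omega
      obtain ⟨_, hcard'⟩ := hiff.1 he'
      rw [Nat.card_sum] at hcard'
      refine ⟨hconn, ?_⟩
      rw [Nat.card_sum]
      omega
    · intro htree
      obtain ⟨_, hcard⟩ := htree
      rw [Nat.card_sum] at hcard
      have htree' : isTreeBip (edgeComp (srcp H) (trgp H)) (edgeBlock (Pp H)) := by
        refine ⟨hconn', ?_⟩
        rw [Nat.card_sum]
        omega
      have := hiff.2 htree'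
      omega

lemma aux : ∀ (k : ℕ) {V : Type u} {E : Type v} [Fintype V] [Fintype E]
    (src trg : E → V) (P : OrientedEdgePartition src trg),
    (∀ e, src e ≠ trg e) →
    (bipGraph (edgeComp src trg) (edgeBlock P)).Connected →
    Nat.card (Quotient (compSetoid src trg)) ≤ k → Concl src trg P := by
  intro k
  induction k with
  | zero =>
    intro V E _ _ src trg P hnl hconn hc
    exact absurd (comp_pos src trg P hconn) (by omega)
  | succ k IHk =>
    intro V E _ _ src trg P hnl hconn hc
    by_cases h1 : Nat.card (Quotient (compSetoid src trg)) = 1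
    · exact base src trg P hconn h1
    by_cases h0 : Nat.card (Quotient (compSetoid src trg)) ≤ k
    · exact IHk src trg P hnl hconn h0
    · have hpos := comp_pos src trg P hconn
      exact step k (fun {V'} {E'} _ _ src' trg' P' => IHk src' trg' P')
        src trg P hnl hconn hc (by omega)

end StepAux

section Wrapper

variable {V : Type u} {E : Type v} (src trg : E → V) (P : OrientedEdgePartition src trg)

/-- The edges of the graph with loops removed. -/
abbrev E0 := {e : E // src e ≠ trg e}

/-- source map of the loopless graph -/
def src0 : E0 src trg → V := fun e => src e.val

/-- target map of the loopless graph -/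
def trg0 : E0 src trg → V := fun e => trg e.val

/-- the induced oriented partition on the loopless graph -/
def P0 : OrientedEdgePartition (src0 src trg) (trg0 src trg) where
  rel := Setoid.comap Subtype.val P.rel
  sameEnds_le := fun e f h => P.sameEnds_le e.val f.val h
  ori := fun e => P.ori e.val
  ori_spec := fun e => P.ori_spec e.val
  ori_const := fun e f h => P.ori_const e.val f.val h

variable {src trg P}

lemma w_comp_eq : compSetoid src trg = compSetoid (src0 src trg) (trg0 src trg) := by
  refine Setoid.ext fun x y => ⟨?_, ?_⟩
  · intro h
    refine eqvGen_map (g := id) ?_ x y h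
    rintro a b ⟨e, rfl, rfl⟩
    by_cases hl : src e = trg e
    · rw [hl]
      exact EqvGen.refl _
    · exact EqvGen.rel _ _ ⟨⟨e, hl⟩, rfl, rfl⟩
  · intro h
    refine eqvGen_map (g := id) ?_ x y h
    rintro a b ⟨e, rfl, rfl⟩
    exact EqvGen.rel _ _ ⟨e.val, rfl, rfl⟩

lemma w_vert_eq (hloop : ∀ e e', src e = trg e → P.rel e e' → sameEnds src trg e e') :
    P.vertexSetoid = (P0 src trg P).vertexSetoid := by
  refine Setoid.ext fun x y => ⟨?_, ?_⟩
  · intro h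
    refine eqvGen_map (g := id) ?_ x y h
    rintro a b ⟨e, f, hre, hc⟩
    by_cases hl : src e = trg e
    · have hse := hloop e f hl hre
      have hor : P.ori e = P.ori f := P.ori_const e f hse
      rcases hc with ⟨rfl, rfl⟩ | ⟨rfl, rfl⟩ <;> rw [hor] <;> exact EqvGen.refl _
    · by_cases hlf : src f = trg f
      · exact absurd (loop_of_sameEnds src trg (hloop f e hlf (P.rel.iseqv.symm hre)) hlf) hl
      · exact EqvGen.rel _ _ ⟨⟨e, hl⟩, ⟨f, hlf⟩, hre, hc⟩
  · intro h
    refine eqvGen_map (g := id) ?_ x y h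
    rintro a b ⟨e, f, hre, hc⟩
    exact EqvGen.rel _ _ ⟨e.val, f.val, hre, hc⟩

lemma w_conn (hloop : ∀ e e', src e = trg e → P.rel e e' → sameEnds src trg e e')
    (hconn : (bipGraph (edgeComp src trg) (edgeBlock P)).Connected) :
    (bipGraph (edgeComp (src0 src trg) (trg0 src trg)) (edgeBlock (P0 src trg P))).Connected := by
  classical
  let χ : Quotient (compSetoid src trg)
      → Quotient (compSetoid (src0 src trg) (trg0 src trg)) :=
    Quotient.lift (fun v => Quotient.mk (compSetoid (src0 src trg) (trg0 src trg)) v)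
      (fun a b h => Quotient.sound (w_comp_eq ▸ h))
  have key : ∀ (n : ℕ) (p q : Quotient (compSetoid src trg))
      (w : (bipGraph (edgeComp src trg) (edgeBlock P)).Walk (Sum.inl p) (Sum.inl q)),
      w.length ≤ n →
      (bipGraph (edgeComp (src0 src trg) (trg0 src trg))
        (edgeBlock (P0 src trg P))).Reachable (Sum.inl (χ p)) (Sum.inl (χ q)) := by
    intro n
    induction n with
    | zero =>
      intro p q w hl
      cases w with
      | nil => exact SimpleGraph.Reachable.refl _
      | cons h w' => simp [SimpleGraph.Walk.length_cons] at hl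
    | succ n IH =>
      intro p q w hl
      cases w with
      | nil => exact SimpleGraph.Reachable.refl _
      | @cons _ z _ h w' =>
        obtain ⟨eb, ⟨h1, h2⟩ | ⟨h1, h2⟩⟩ := h
        · subst h2
          cases w' with
          | @cons _ z2 _ h3 w'' =>
            obtain ⟨eb2, ⟨h4, h5⟩ | ⟨h4, h5⟩⟩ := h3
            · exact absurd h4 (by simp)
            · subst h4
              obtain ⟨e1, rfl⟩ := Quotient.exists_rep eb
              obtain ⟨e2, rfl⟩ := Quotient.exists_rep eb2
              have hp : p = Quotient.mk (compSetoid src trg) (src e1) := Sum.inl.inj h1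
              have hblocks : P.rel e1 e2 := Quotient.exact
                (show Quotient.mk P.rel e1 = Quotient.mk P.rel e2 from Sum.inr.inj h5)
              have hrest := IH (edgeComp src trg (Quotient.mk _ e2)) q w'' (by
                have hl2 : w''.length + 1 + 1 ≤ n + 1 := hl
                omega)
              refine SimpleGraph.Reachable.trans ?_ hrest
              by_cases hsame : Quotient.mk (compSetoid src trg) (src e1)
                  = Quotient.mk (compSetoid src trg) (src e2)
              · rw [hp]
                have : χ (Quotient.mk (compSetoid src trg) (src e1))
                    = χ (edgeComp src trg (Quotient.mk _ e2)) := congrArg χ hsame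
                rw [this]
              · have hnl1 : src e1 ≠ trg e1 := fun hl1 =>
                  hsame (Quotient.sound (comp_of_sameEnds src trg (hloop e1 e2 hl1 hblocks)))
                have hnl2 : src e2 ≠ trg e2 := fun hl2 =>
                  hsame (Quotient.sound (EqvGen.symm _ _
                    (comp_of_sameEnds src trg (hloop e2 e1 hl2 (P.rel.iseqv.symm hblocks)))))
                have had1 : (bipGraph (edgeComp (src0 src trg) (trg0 src trg))
                    (edgeBlock (P0 src trg P))).Adj
                    (Sum.inl (χ (Quotient.mk (compSetoid src trg) (src e1))))
                    (Sum.inr (edgeBlock (P0 src trg P)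
                      (Quotient.mk (sameEndsSetoid (src0 src trg) (trg0 src trg)) ⟨e1, hnl1⟩))) :=
                  ⟨Quotient.mk _ ⟨e1, hnl1⟩, Or.inl ⟨rfl, rfl⟩⟩
                have had2 : (bipGraph (edgeComp (src0 src trg) (trg0 src trg))
                    (edgeBlock (P0 src trg P))).Adj
                    (Sum.inl (χ (Quotient.mk (compSetoid src trg) (src e2))))
                    (Sum.inr (edgeBlock (P0 src trg P)
                      (Quotient.mk (sameEndsSetoid (src0 src trg) (trg0 src trg)) ⟨e2, hnl2⟩))) :=
                  ⟨Quotient.mk _ ⟨e2, hnl2⟩, Or.inl ⟨rfl, rfl⟩⟩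
                have hbe : edgeBlock (P0 src trg P)
                    (Quotient.mk (sameEndsSetoid (src0 src trg) (trg0 src trg)) ⟨e1, hnl1⟩)
                    = edgeBlock (P0 src trg P)
                      (Quotient.mk (sameEndsSetoid (src0 src trg) (trg0 src trg)) ⟨e2, hnl2⟩) :=
                  Quotient.sound hblocks
                rw [hp]
                exact (had1.reachable.trans (hbe ▸ had2.reachable.symm))
        · exact absurd h2 (by simp)
  have hkey' : ∀ u v2 : V,
      (bipGraph (edgeComp (src0 src trg) (trg0 src trg))
        (edgeBlock (P0 src trg P))).Reachable
        (Sum.inl (Quotient.mk (compSetoid (src0 src trg) (trg0 src trg)) u))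
        (Sum.inl (Quotient.mk (compSetoid (src0 src trg) (trg0 src trg)) v2)) := by
    intro u v2
    obtain ⟨w⟩ := hconn.preconnected (Sum.inl (Quotient.mk (compSetoid src trg) u))
      (Sum.inl (Quotient.mk (compSetoid src trg) v2))
    exact key w.length _ _ w le_rfl
  have hwhite : ∀ z : Quotient (compSetoid (src0 src trg) (trg0 src trg))
      ⊕ Quotient (P0 src trg P).rel, ∃ v2 : V,
      (bipGraph (edgeComp (src0 src trg) (trg0 src trg))
        (edgeBlock (P0 src trg P))).Reachable z
        (Sum.inl (Quotient.mk (compSetoid (src0 src trg) (trg0 src trg)) v2)) := by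
    rintro (q | b)
    · obtain ⟨v2, rfl⟩ := Quotient.exists_rep q
      exact ⟨v2, SimpleGraph.Reachable.refl _⟩
    · obtain ⟨e0, rfl⟩ := Quotient.exists_rep b
      refine ⟨src e0.val, ?_⟩
      have : (bipGraph (edgeComp (src0 src trg) (trg0 src trg))
          (edgeBlock (P0 src trg P))).Adj
          (Sum.inl (Quotient.mk (compSetoid (src0 src trg) (trg0 src trg)) (src e0.val)))
          (Sum.inr (Quotient.mk (P0 src trg P).rel e0)) :=
        ⟨Quotient.mk _ e0, Or.inl ⟨rfl, rfl⟩⟩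
      exact this.symm.reachable
  obtain ⟨x⟩ := hconn.nonempty
  have hne : Nonempty (Quotient (compSetoid (src0 src trg) (trg0 src trg))
      ⊕ Quotient (P0 src trg P).rel) := by
    rcases x with q | b
    · obtain ⟨v2, rfl⟩ := Quotient.exists_rep q
      exact ⟨Sum.inl (Quotient.mk _ v2)⟩
    · obtain ⟨e, rfl⟩ := Quotient.exists_rep b
      exact ⟨Sum.inl (Quotient.mk _ (src e))⟩
  haveI := hne
  exact ⟨fun z1 z2 => by
    obtain ⟨v1, hr1⟩ := hwhite z1
    obtain ⟨v2, hr2⟩ := hwhite z2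
    exact (hr1.trans (hkey' v1 v2)).trans hr2.symm⟩

lemma w_card [Fintype E]
    (hloop : ∀ e e', src e = trg e → P.rel e e' → sameEnds src trg e e') :
    Nat.card (Quotient (sameEndsSetoid src trg)) + Nat.card (Quotient (P0 src trg P).rel)
      = Nat.card (Quotient (sameEndsSetoid (src0 src trg) (trg0 src trg)))
        + Nat.card (Quotient P.rel) := by
  classical
  let L : Quotient (sameEndsSetoid src trg) → Prop :=
    Quotient.lift (fun e => src e = trg e) (fun e f h => propext
      ⟨fun hl => loop_of_sameEnds src trg h hl, fun hl => loop_of_sameEnds src trg h.symm hl⟩)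
  let LB : Quotient P.rel → Prop :=
    Quotient.lift (fun e => src e = trg e) (fun e f h => propext
      ⟨fun hl => loop_of_sameEnds src trg (hloop e f hl h) hl,
       fun hl => loop_of_sameEnds src trg (hloop f e hl (P.rel.iseqv.symm h)) hl⟩)
  have hE : Nat.card (Quotient (sameEndsSetoid src trg))
      = Nat.card {x // L x} + Nat.card {x // ¬ L x} := by
    rw [← Nat.card_sum]
    exact Nat.card_congr (Equiv.sumCompl L).symm
  have hB : Nat.card (Quotient P.rel)
      = Nat.card {x // LB x} + Nat.card {x // ¬ LB x} := by
    rw [← Nat.card_sum]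
    exact Nat.card_congr (Equiv.sumCompl LB).symm
  have hLB : ∀ y : Quotient (sameEndsSetoid src trg), L y → LB (edgeBlock P y) := by
    intro y
    induction y using Quotient.ind with
    | _ e => exact fun h => h
  have hLoop : Nat.card {x // L x} = Nat.card {x // LB x} := by
    refine Nat.card_congr (Equiv.ofBijective
      (fun x => ⟨edgeBlock P x.val, hLB x.val x.prop⟩) ⟨?_, ?_⟩)
    · rintro ⟨a, ha⟩ ⟨b, hb⟩ h
      have h' : edgeBlock P a = edgeBlock P b := congrArg Subtype.val h
      refine Subtype.ext ?_
      induction a using Quotient.ind with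
      | _ e =>
        induction b using Quotient.ind with
        | _ f => exact Quotient.sound (hloop e f ha (Quotient.exact h'))
    · rintro ⟨b, hb⟩
      obtain ⟨e, rfl⟩ := Quotient.exists_rep b
      exact ⟨⟨Quotient.mk _ e, hb⟩, rfl⟩
  have hNL : Nat.card {x // ¬ L x}
      = Nat.card (Quotient (sameEndsSetoid (src0 src trg) (trg0 src trg))) := by
    refine (Nat.card_congr (Equiv.ofBijective
      (Quotient.lift (fun e0 : E0 src trg =>
        (⟨Quotient.mk (sameEndsSetoid src trg) e0.val, e0.prop⟩ : {x // ¬ L x}))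
        (fun e f h => Subtype.ext (Quotient.sound h)))
      ⟨?_, ?_⟩)).symm
    · intro a b h
      induction a using Quotient.ind with
      | _ e =>
        induction b using Quotient.ind with
        | _ f =>
          have h' : Quotient.mk (sameEndsSetoid src trg) e.val
              = Quotient.mk (sameEndsSetoid src trg) f.val := congrArg Subtype.val h
          have hse : sameEnds src trg e.val f.val := Quotient.exact h'
          exact Quotient.sound hse
    · rintro ⟨x, hx⟩
      obtain ⟨e, rfl⟩ := Quotient.exists_rep x
      exact ⟨Quotient.mk _ ⟨e, hx⟩, rfl⟩
  have hNB : Nat.card {x // ¬ LB x} = Nat.card (Quotient (P0 src trg P).rel) := by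
    refine (Nat.card_congr (Equiv.ofBijective
      (Quotient.lift (fun e0 : E0 src trg =>
        (⟨Quotient.mk P.rel e0.val, e0.prop⟩ : {x // ¬ LB x}))
        (fun e f h => Subtype.ext (Quotient.sound h)))
      ⟨?_, ?_⟩)).symm
    · intro a b h
      induction a using Quotient.ind with
      | _ e =>
        induction b using Quotient.ind with
        | _ f =>
          have h' : Quotient.mk P.rel e.val = Quotient.mk P.rel f.val :=
            congrArg Subtype.val h
          have hre : P.rel e.val f.val := Quotient.exact h'
          exact Quotient.sound hre
    · rintro ⟨x, hx⟩
      obtain ⟨e, rfl⟩ := Quotient.exists_rep x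
      exact ⟨Quotient.mk _ ⟨e, hx⟩, rfl⟩
  omega

end Wrapper

end VvAux

/-- Let `(τ,∼)` be an oriented partition of the edges of a labelled oriented
graph `G` such that every loop of the elementarization is a singleton block
of `τ`, and suppose the bipartite graph `G(τ)` is connected.  Then
`#(τ∼) ≤ |V| − 2(c − 1)`, where `c` is the number of connected components
of `G`, with equality if and only if `G(τ)` is a tree. -/
theorem vertexSetoid_card_le {V E : Type*} [Fintype V] [Fintype E]
    (src trg : E → V) (P : OrientedEdgePartition src trg)
    (hloop : ∀ e e', src e = trg e → P.rel e e' → sameEnds src trg e e')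
    (hconn : (bipGraph (edgeComp src trg) (edgeBlock P)).Connected) :
    (Nat.card (Quotient P.vertexSetoid) : ℤ) ≤
      (Fintype.card V : ℤ) -
        2 * ((Nat.card (Quotient (compSetoid src trg)) : ℤ) - 1) ∧
    ((Nat.card (Quotient P.vertexSetoid) : ℤ) =
        (Fintype.card V : ℤ) -
          2 * ((Nat.card (Quotient (compSetoid src trg)) : ℤ) - 1) ↔
      isTreeBip (edgeComp src trg) (edgeBlock P)) := by
  classical
  haveI : Fintype (VvAux.E0 src trg) := Fintype.ofFinite _
  have hnl0 : ∀ e : VvAux.E0 src trg, VvAux.src0 src trg e ≠ VvAux.trg0 src trg e :=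
    fun e => e.prop
  have hconn0 := VvAux.w_conn (P := P) hloop hconn
  obtain ⟨h1, h2⟩ := VvAux.aux
    (Nat.card (Quotient (compSetoid (VvAux.src0 src trg) (VvAux.trg0 src trg))))
    (VvAux.src0 src trg) (VvAux.trg0 src trg) (VvAux.P0 src trg P) hnl0 hconn0 le_rfl
  have hc : Nat.card (Quotient (compSetoid src trg))
      = Nat.card (Quotient (compSetoid (VvAux.src0 src trg) (VvAux.trg0 src trg))) := by
    rw [VvAux.w_comp_eq]
  have hn : Nat.card (Quotient P.vertexSetoid)
      = Nat.card (Quotient (VvAux.P0 src trg P).vertexSetoid) := by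
    rw [VvAux.w_vert_eq hloop]
  have hcard := VvAux.w_card (P := P) hloop
  constructor
  · rw [hn, hc]
    exact h1
  · rw [hn, hc, h2]
    constructor
    · rintro ⟨_, hcd⟩
      refine ⟨hconn, ?_⟩
      rw [Nat.card_sum] at hcd ⊢
      omega
    · rintro ⟨_, hcd⟩
      refine ⟨hconn0, ?_⟩
      rw [Nat.card_sum] at hcd ⊢
      omega
end

section
/- Let γ ∈ S_m with cycles of lengths m_1,…,m_r, σ ∈ P_2(m) a pairing, and π a partition of {1,…,m}. If for every block {u,v} of σ the edges e_u^π = ([γ(u)]_π,[u]_π) and e_v^π = ([γ(v)]_π,[v]_π) connect the same pair of blocks of π with opposite orientations, then every cycle of the permutation γσ is contained in a block of π (γσ ≤ π). -/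
/-- The index set of the `(m 0, …, m (r-1))`-annulus. -/
def annIndex (r : ℕ) (m : Fin r → ℕ) : Type := Σ i : Fin r, Fin (m i)

/-- The permutation `γ_{m_1,…,m_r}` whose cycles are the `r` discrete circles
of sizes `m 0, …, m (r-1)`. -/
def gammaAnn (r : ℕ) (m : Fin r → ℕ) : Equiv.Perm (annIndex r m) :=
  Equiv.sigmaCongrRight fun i => finRotate (m i)

/-- Let `γ` be the permutation with cycles of lengths `m_1,…,m_r`, let `σ` be
a pairing (fixed-point-free involution), and let `π` be a partition of the
ground set.  If for every block `{u,v}` of `σ` the edges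
`e_u = ([γ(u)],[u])` and `e_v = ([γ(v)],[v])` connect the same pair of blocks
of `π` with opposite orientations (`[u] = [γ(v)]` and `[v] = [γ(u)]`), then
every cycle of `γσ` is contained in a block of `π`, i.e. `γσ ≤ π`. -/
theorem gammaSigma_le_of_opposite_orientation (r : ℕ) (m : Fin r → ℕ)
    (σ : Equiv.Perm (annIndex r m)) (π : Setoid (annIndex r m))
    (hfix : ∀ x, σ x ≠ x) (hinv : σ * σ = 1)
    (hopp : ∀ u : annIndex r m,
      π u (gammaAnn r m (σ u)) ∧ π (σ u) (gammaAnn r m u)) :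
    ∀ x y : annIndex r m, (gammaAnn r m * σ).SameCycle x y → π x y := by
  set f := gammaAnn r m * σ with hf
  have hstep : ∀ z : annIndex r m, π z (f z) := by
    intro z
    have := (hopp z).1
    simpa [hf, Equiv.Perm.mul_apply] using this
  have hpow : ∀ (i : ℤ) (x : annIndex r m), π x ((f ^ i) x) := by
    intro i
    induction i using Int.induction_on with
    | zero => intro x; simp
    | succ k ih =>
      intro x
      have h1 := ih x
      have h2 := hstep ((f ^ (k : ℤ)) x)
      have : (f ^ ((k : ℤ) + 1)) x = f ((f ^ (k : ℤ)) x) := by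
        rw [add_comm, zpow_one_add, Equiv.Perm.mul_apply]
      rw [this]
      exact π.trans h1 h2
    | pred k ih =>
      intro x
      have h1 := ih x
      have h2 := hstep ((f ^ (-(k : ℤ) - 1)) x)
      have : f ((f ^ (-(k : ℤ) - 1)) x) = (f ^ (-(k : ℤ))) x := by
        rw [← Equiv.Perm.mul_apply, ← zpow_one_add]
        ring_nf
      rw [this] at h2
      exact π.trans h1 (π.symm h2)
  intro x y hxy
  obtain ⟨i, hi⟩ := hxy
  exact hi ▸ hpow i x
end
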